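/- arXiv:math/9910145 — 2 statements merged into one kernel-verified Lean document; each statement's English description precedes it below -/
import Mathlib

section
/- Let N be squarefree and coprime to D_A = 4(tr(A)² − 4), and suppose that for every prime p dividing N the row vectors n and nA are linearly independent modulo p. Then the number of quadruples (i,j,k,l) with 1 ≤ i,j,k,l ≤ ord(A,N) satisfying n(A^i − A^j + A^k − A^l) ≡ 0 (mod N) is at most 3^{ω(N)}·ord(A,N)². -/
open Matrix

/-- `matOrd A N` is the order of `A` modulo `N`: the least `k ≥ 1`
with `A^k ≡ I (mod N)`. -/
noncomputable def matOrd (A : Matrix (Fin 2) (Fin 2) ℤ) (N : ℕ) : ℕ :=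
  sInf {k | 0 < k ∧ ∀ i j, (N : ℤ) ∣ (A ^ k - 1) i j}

/-- `nu A N n` is the number of quadruples `(i,j,k,l)` with
`1 ≤ i,j,k,l ≤ ord(A,N)` and `n (A^i - A^j + A^k - A^l) ≡ 0 (mod N)`. -/
noncomputable def nu (A : Matrix (Fin 2) (Fin 2) ℤ) (N : ℕ) (n : Fin 2 → ℤ) : ℕ :=
  {q : ℕ × ℕ × ℕ × ℕ |
    q.1 ∈ Finset.Icc 1 (matOrd A N) ∧ q.2.1 ∈ Finset.Icc 1 (matOrd A N) ∧
    q.2.2.1 ∈ Finset.Icc 1 (matOrd A N) ∧ q.2.2.2 ∈ Finset.Icc 1 (matOrd A N) ∧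
    ∀ m, (N : ℤ) ∣ Matrix.vecMul n (A ^ q.1 - A ^ q.2.1 + A ^ q.2.2.1 - A ^ q.2.2.2) m}.ncard


set_option maxHeartbeats 1000000

section Helpers


section GP
variable {K : Type} [CommRing K]
variable (U : (Matrix (Fin 2) (Fin 2) K)ˣ)

private noncomputable def gp (c : ℤ) : Matrix (Fin 2) (Fin 2) K := ↑(U ^ c)

private lemma gp_add (a b : ℤ) : gp U a * gp U b = gp U (a + b) := by
  rw [gp, gp, gp, ← Units.val_mul, ← _root_.zpow_add]

private lemma gp_zero : gp U 0 = 1 := by simp [gp]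

private lemma gp_comm (a b : ℤ) : gp U a * gp U b = gp U b * gp U a := by
  rw [gp_add, gp_add, add_comm]

private lemma gp_mul_eq (a b c : ℤ) (h : a + b = c) : gp U a * gp U b = gp U c := by
  rw [gp_add, h]

private lemma gp_cancel (c : ℤ) : gp U c * gp U (-c) = 1 := by
  rw [gp_add]; simp [gp]

end GP

section Heart
variable {K : Type} [Field K]

private lemma add_adjugate (M : Matrix (Fin 2) (Fin 2) K) :
    M + adjugate M = (trace M) • (1 : Matrix (Fin 2) (Fin 2) K) := by
  rw [adjugate_fin_two, trace_fin_two]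
  ext i j
  fin_cases i <;> fin_cases j <;>
    simp [Matrix.one_apply, Matrix.add_apply] <;> ring

private lemma ch2 (M : Matrix (Fin 2) (Fin 2) K) :
    M * M - (trace M) • M + (det M) • (1 : Matrix (Fin 2) (Fin 2) K) = 0 := by
  rw [trace_fin_two, det_fin_two]
  ext i j
  fin_cases i <;> fin_cases j <;>
    simp [Matrix.mul_apply, Fin.sum_univ_two, Matrix.one_apply] <;> ring

private lemma scalar_eq_zero' {c : K} (h : c • (1 : Matrix (Fin 2) (Fin 2) K) = 0) : c = 0 := by
  have := congrFun (congrFun h 0) 0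
  simpa using this

variable (U : (Matrix (Fin 2) (Fin 2) K)ˣ)

private lemma gp_det (hdet : det (U : Matrix (Fin 2) (Fin 2) K) = 1) (c : ℤ) :
    det (gp U c) = 1 := by
  have h1 : Units.map (detMonoidHom : Matrix (Fin 2) (Fin 2) K →* K) U = 1 := by
    ext; simpa using hdet
  have h2 : Units.map (detMonoidHom : Matrix (Fin 2) (Fin 2) K →* K) (U ^ c) = 1 := by
    rw [map_zpow, h1, _root_.one_zpow]
  have h3 := congrArg Units.val h2
  rw [Units.coe_map] at h3
  simpa [gp] using h3

private lemma gp_tr (hdet : det (U : Matrix (Fin 2) (Fin 2) K) = 1) (c : ℤ) :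
    gp U c + gp U (-c) = (trace (gp U c)) • 1 := by
  have h1 : adjugate (gp U c) * gp U c = 1 := by
    rw [adjugate_mul, gp_det U hdet, one_smul]
  have h2 : gp U c * gp U (-c) = 1 := by rw [gp_add]; simp [gp]
  have h3 : gp U (-c) = adjugate (gp U c) := by
    calc gp U (-c) = 1 * gp U (-c) := (one_mul _).symm
    _ = (adjugate (gp U c) * gp U c) * gp U (-c) := by rw [h1]
    _ = adjugate (gp U c) * (gp U c * gp U (-c)) := by rw [mul_assoc]
    _ = adjugate (gp U c) := by rw [h2, mul_one]
  rw [h3]; exact add_adjugate _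

private lemma gp_inv_eq (hdet : det (U : Matrix (Fin 2) (Fin 2) K) = 1) (c : ℤ) :
    gp U (-c) = (trace (gp U c)) • 1 - gp U c := by
  have := gp_tr U hdet c
  rw [eq_sub_iff_add_eq, add_comm, this]

/-- membership in the affine span of 1 and U -/
private def InSp (M : Matrix (Fin 2) (Fin 2) K) : Prop :=
  ∃ c d : K, M = c • 1 + d • (U : Matrix (Fin 2) (Fin 2) K)

private lemma hU2 (hdet : det (U : Matrix (Fin 2) (Fin 2) K) = 1) :
    (U : Matrix (Fin 2) (Fin 2) K) * U =
      (trace (U : Matrix (Fin 2) (Fin 2) K)) • (U : Matrix (Fin 2) (Fin 2) K) - 1 := by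
  have h := ch2 (U : Matrix (Fin 2) (Fin 2) K)
  rw [hdet, one_smul] at h
  rw [eq_sub_iff_add_eq]
  rw [sub_add_eq_add_sub, sub_eq_zero] at h
  exact h

private lemma hUinv (hdet : det (U : Matrix (Fin 2) (Fin 2) K) = 1) :
    ((U⁻¹ : (Matrix (Fin 2) (Fin 2) K)ˣ) : Matrix (Fin 2) (Fin 2) K) =
      (trace (U : Matrix (Fin 2) (Fin 2) K)) • 1 - (U : Matrix (Fin 2) (Fin 2) K) := by
  have h1 : adjugate ((U : Matrix (Fin 2) (Fin 2) K)) * U = 1 := by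
    rw [adjugate_mul, hdet, one_smul]
  have h3 : ((U⁻¹ : (Matrix (Fin 2) (Fin 2) K)ˣ) : Matrix (Fin 2) (Fin 2) K)
      = adjugate ((U : Matrix (Fin 2) (Fin 2) K)) := by
    calc ((U⁻¹ : (Matrix (Fin 2) (Fin 2) K)ˣ) : Matrix (Fin 2) (Fin 2) K)
        = 1 * ↑U⁻¹ := (one_mul _).symm
    _ = (adjugate ((U : Matrix (Fin 2) (Fin 2) K)) * ↑U) * ↑U⁻¹ := by rw [h1]
    _ = adjugate ((U : Matrix (Fin 2) (Fin 2) K)) * (↑U * ↑U⁻¹) := by rw [mul_assoc]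
    _ = adjugate ((U : Matrix (Fin 2) (Fin 2) K)) := by
          rw [← Units.val_mul, mul_inv_cancel, Units.val_one, mul_one]
  rw [h3, eq_sub_iff_add_eq, add_comm]
  exact add_adjugate _

private lemma insp_gp (hdet : det (U : Matrix (Fin 2) (Fin 2) K) = 1) (c : ℤ) :
    InSp U (gp U c) := by
  induction c using Int.induction_on with
  | zero => exact ⟨1, 0, by simp [gp_zero]⟩
  | succ i ih =>
      obtain ⟨a, b, hab⟩ := ih
      have : gp U (i + 1) = gp U i * (U : Matrix (Fin 2) (Fin 2) K) := by
        rw [show ((U : Matrix (Fin 2) (Fin 2) K)) = gp U 1 by simp [gp], gp_add]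
      rw [this, hab]
      refine ⟨-b, a + b * trace (U : Matrix (Fin 2) (Fin 2) K), ?_⟩
      rw [add_mul, smul_mul_assoc, smul_mul_assoc, one_mul, hU2 U hdet]
      rw [smul_sub, smul_smul]
      module
  | pred i ih =>
      obtain ⟨a, b, hab⟩ := ih
      have : gp U (-i - 1) = gp U (-i) * ((U⁻¹ : (Matrix (Fin 2) (Fin 2) K)ˣ) : Matrix (Fin 2) (Fin 2) K) := by
        rw [show ((U⁻¹ : (Matrix (Fin 2) (Fin 2) K)ˣ) : Matrix (Fin 2) (Fin 2) K) = gp U (-1) by simp [gp], gp_add]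
        ring_nf
      rw [this, hab]
      refine ⟨a * trace (U : Matrix (Fin 2) (Fin 2) K) + b, -a, ?_⟩
      have hc : (U : Matrix (Fin 2) (Fin 2) K) * ((U⁻¹ : (Matrix (Fin 2) (Fin 2) K)ˣ) : Matrix (Fin 2) (Fin 2) K) = 1 := by
        rw [← Units.val_mul, mul_inv_cancel, Units.val_one]
      rw [add_mul, smul_mul_assoc, smul_mul_assoc, one_mul, hc, hUinv U hdet]
      rw [smul_sub, smul_smul]
      module
end Heart

section Heart2
variable {K : Type} [Field K] (U : (Matrix (Fin 2) (Fin 2) K)ˣ)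

private lemma det_comb (c d : K) (B : Matrix (Fin 2) (Fin 2) K) :
    det (c • 1 + d • B) = c^2 + c*d*(trace B) + d^2 * det B := by
  rw [det_fin_two, det_fin_two, trace_fin_two]
  simp [Matrix.add_apply, Matrix.smul_apply, Matrix.one_apply]
  ring

private lemma trace_comb (c d : K) (B : Matrix (Fin 2) (Fin 2) K) :
    trace (c • 1 + d • B) = 2*c + d * trace B := by
  rw [trace_fin_two, trace_fin_two]
  simp [Matrix.add_apply, Matrix.smul_apply, Matrix.one_apply]
  ring

private lemma nilsq (hdet : det (U : Matrix (Fin 2) (Fin 2) K) = 1)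
    (hdisc : (trace (U : Matrix (Fin 2) (Fin 2) K))^2 ≠ 4)
    {M : Matrix (Fin 2) (Fin 2) K} (hsp : InSp U M) (hM : M * M = 0) : M = 0 := by
  obtain ⟨c, d, rfl⟩ := hsp
  by_cases hd : d = 0
  · subst hd
    simp only [zero_smul, add_zero] at hM ⊢
    have h1 : (c • (1 : Matrix (Fin 2) (Fin 2) K)) * (c • 1) = (c * c) • 1 := by
      rw [smul_mul_assoc, mul_smul_comm, one_mul, smul_smul]
    rw [h1] at hM
    have := scalar_eq_zero' hM
    have : c = 0 := by
      rcases mul_eq_zero.mp this with h | h <;> exact h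
    simp [this]
  · exfalso
    set M := c • (1 : Matrix (Fin 2) (Fin 2) K) + d • (U : Matrix (Fin 2) (Fin 2) K) with hMdef
    have hdet0 : det M = 0 := by
      have h1 : det M * det M = 0 := by rw [← det_mul, hM]; exact Matrix.det_zero
      rcases mul_eq_zero.mp h1 with h | h <;> exact h
    have hch := ch2 M
    rw [hM, hdet0, zero_smul, add_zero, zero_sub, neg_eq_zero] at hch
    -- hch : trace M • M = 0
    rcases smul_eq_zero.mp hch with htr | hM0
    · -- trace M = 0 and det M = 0
      have ht : 2*c + d * trace (U : Matrix (Fin 2) (Fin 2) K) = 0 := by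
        rw [← trace_comb]; exact htr
      have hdt : c^2 + c*d*(trace (U : Matrix (Fin 2) (Fin 2) K)) + d^2 * 1 = 0 := by
        rw [← hdet, ← det_comb]; exact hdet0
      apply hdisc
      have hd2 : (trace (U : Matrix (Fin 2) (Fin 2) K))^2 * d^2 - 4 * d^2 = 0 := by
        linear_combination (trace (U : Matrix (Fin 2) (Fin 2) K) * d + 2*c) * ht - 4 * hdt
      have h2 : ((trace (U : Matrix (Fin 2) (Fin 2) K))^2 - 4) * d^2 = 0 := by
        linear_combination hd2
      rcases mul_eq_zero.mp h2 with h | h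
      · exact sub_eq_zero.mp h
      · exact absurd (pow_eq_zero_iff (by norm_num : (2:ℕ) ≠ 0) |>.mp h) hd
    · -- c•1 + d•U = 0 : U is scalar, contradicting disc ≠ 0
      apply hdisc
      have hU : (U : Matrix (Fin 2) (Fin 2) K) = (-(c/d)) • 1 := by
        have h1 : d • (U : Matrix (Fin 2) (Fin 2) K) = -(c • (1 : Matrix (Fin 2) (Fin 2) K)) :=
          eq_neg_of_add_eq_zero_right hM0
        have h2 : (U : Matrix (Fin 2) (Fin 2) K) = d⁻¹ • (d • (U : Matrix (Fin 2) (Fin 2) K)) := by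
          rw [smul_smul, inv_mul_cancel₀ hd, one_smul]
        rw [h2, h1, smul_neg, smul_smul]
        rw [← neg_smul]
        congr 1
        field_simp
      have htr : trace (U : Matrix (Fin 2) (Fin 2) K) = (-(c/d)) * 2 := by
        rw [hU, Matrix.trace_smul, Matrix.trace_one]
        simp [smul_eq_mul]
      have hdt : (-(c/d))^2 = 1 := by
        have := hdet
        rw [hU, Matrix.det_smul, Matrix.det_one, mul_one] at this
        simpa using this
      rw [htr]
      linear_combination 4 * hdt

variable {U}

private lemma insp_sub_one (hdet : det (U : Matrix (Fin 2) (Fin 2) K) = 1) (c : ℤ) :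
    InSp U (gp U c - 1) := by
  obtain ⟨a, b, hab⟩ := insp_gp U hdet c
  exact ⟨a - 1, b, by rw [hab, sub_smul, one_smul]; abel⟩

private lemma insp_add_one (hdet : det (U : Matrix (Fin 2) (Fin 2) K) = 1) (c : ℤ) :
    InSp U (gp U c + 1) := by
  obtain ⟨a, b, hab⟩ := insp_gp U hdet c
  exact ⟨a + 1, b, by rw [hab, add_smul, one_smul]; abel⟩

private lemma gp_sq (hdet : det (U : Matrix (Fin 2) (Fin 2) K) = 1) (c : ℤ) :
    gp U c * gp U c = trace (gp U c) • gp U c - 1 := by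
  have h1 : gp U c * gp U (-c) = 1 := by rw [gp_add]; simp [gp]
  rw [gp_inv_eq U hdet, mul_sub, mul_smul_comm, mul_one] at h1
  rw [← h1]; abel

private lemma tr_eq_two (hdet : det (U : Matrix (Fin 2) (Fin 2) K) = 1)
    (hdisc : (trace (U : Matrix (Fin 2) (Fin 2) K))^2 ≠ 4)
    (c : ℤ) (h : trace (gp U c) = 2) : gp U c = 1 := by
  have h3 : (gp U c - 1) * (gp U c - 1) = 0 := by
    rw [sub_mul, mul_sub, mul_sub, mul_one, one_mul, gp_sq hdet, h, two_smul]; simp only [one_mul, mul_one]; abel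
  have := nilsq U hdet hdisc (insp_sub_one hdet c) h3
  rwa [sub_eq_zero] at this

private lemma tr_eq_negtwo (hdet : det (U : Matrix (Fin 2) (Fin 2) K) = 1)
    (hdisc : (trace (U : Matrix (Fin 2) (Fin 2) K))^2 ≠ 4)
    (c : ℤ) (h : trace (gp U c) = -2) : gp U c = -1 := by
  have h3 : (gp U c + 1) * (gp U c + 1) = 0 := by
    rw [add_mul, mul_add, mul_add, mul_one, one_mul, gp_sq hdet, h, neg_smul, two_smul]; simp only [one_mul, mul_one]; abel
  have h4 : InSp U (gp U c + 1) := insp_add_one hdet c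
  have := nilsq U hdet hdisc h4 h3
  exact eq_neg_of_add_eq_zero_left this

private lemma pairscalar1 (hdet : det (U : Matrix (Fin 2) (Fin 2) K) = 1) (c : ℤ) :
    (gp U c - 1) * (gp U (-c) - 1) = ((2:K) - trace (gp U c)) • 1 := by
  have hx : gp U c * gp U (-c) = 1 := by rw [gp_add]; simp [gp]
  have ht := gp_tr U hdet c
  rw [sub_mul, mul_sub, mul_sub, mul_one, one_mul, hx, sub_smul, ← ht, two_smul]
  simp only [one_mul, mul_one]
  abel

private lemma pairscalar2 (hdet : det (U : Matrix (Fin 2) (Fin 2) K) = 1) (c : ℤ) :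
    (1 + gp U c) * (1 + gp U (-c)) = ((2:K) + trace (gp U c)) • 1 := by
  have hx : gp U c * gp U (-c) = 1 := by rw [gp_add]; simp [gp]
  have ht := gp_tr U hdet c
  rw [add_mul, mul_add, mul_add, mul_one, one_mul, hx, add_smul, ← ht, two_smul]
  simp only [one_mul, mul_one]
  abel

private lemma commute_gp (a b : ℤ) : Commute (gp U a) (gp U b) := by
  unfold Commute SemiconjBy
  rw [gp_add, gp_add, add_comm]

private lemma split1 (hdet : det (U : Matrix (Fin 2) (Fin 2) K) = 1)
    (hdisc : (trace (U : Matrix (Fin 2) (Fin 2) K))^2 ≠ 4)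
    (c d : ℤ) (h : (gp U c - 1) * (gp U d - 1) = 0) : gp U c = 1 ∨ gp U d = 1 := by
  have comm1 : Commute (gp U (-c) - 1) (gp U d - 1) :=
    Commute.sub_left (Commute.sub_right (commute_gp _ _) (Commute.one_right _))
      (Commute.sub_right (Commute.one_left _) (Commute.one_right _))
  have key : (((2:K) - trace (gp U c)) * ((2:K) - trace (gp U d))) • (1 : Matrix (Fin 2) (Fin 2) K) = 0 := by
    have e1 : (((2:K) - trace (gp U c)) • (1 : Matrix (Fin 2) (Fin 2) K)) *
        (((2:K) - trace (gp U d)) • 1) =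
        (((2:K) - trace (gp U c)) * ((2:K) - trace (gp U d))) • 1 := by
      rw [smul_mul_assoc, mul_smul_comm, one_mul, smul_smul]
    rw [← e1, ← pairscalar1 hdet c, ← pairscalar1 hdet d]
    rw [Commute.mul_mul_mul_comm comm1]
    rw [h, zero_mul]
  have := scalar_eq_zero' key
  rcases mul_eq_zero.mp this with h1 | h1
  · exact Or.inl (tr_eq_two hdet hdisc c (sub_eq_zero.mp h1).symm)
  · exact Or.inr (tr_eq_two hdet hdisc d (sub_eq_zero.mp h1).symm)

private lemma split2 (hdet : det (U : Matrix (Fin 2) (Fin 2) K) = 1)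
    (hdisc : (trace (U : Matrix (Fin 2) (Fin 2) K))^2 ≠ 4)
    (c d : ℤ) (h : (gp U c - 1) * (1 + gp U d) = 0) : gp U c = 1 ∨ gp U d = -1 := by
  have comm1 : Commute (gp U (-c) - 1) (1 + gp U d) :=
    Commute.sub_left (Commute.add_right (Commute.one_right _) (commute_gp _ _))
      (Commute.add_right (Commute.one_left _) (Commute.one_left _))
  have key : (((2:K) - trace (gp U c)) * ((2:K) + trace (gp U d))) • (1 : Matrix (Fin 2) (Fin 2) K) = 0 := by
    have e1 : (((2:K) - trace (gp U c)) • (1 : Matrix (Fin 2) (Fin 2) K)) *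
        (((2:K) + trace (gp U d)) • 1) =
        (((2:K) - trace (gp U c)) * ((2:K) + trace (gp U d))) • 1 := by
      rw [smul_mul_assoc, mul_smul_comm, one_mul, smul_smul]
    rw [← e1, ← pairscalar1 hdet c, ← pairscalar2 hdet d]
    rw [Commute.mul_mul_mul_comm comm1]
    rw [h, zero_mul]
  have := scalar_eq_zero' key
  rcases mul_eq_zero.mp this with h1 | h1
  · exact Or.inl (tr_eq_two hdet hdisc c (sub_eq_zero.mp h1).symm)
  · exact Or.inr (tr_eq_negtwo hdet hdisc d (eq_neg_of_add_eq_zero_right h1))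

private theorem heart (hdet : det (U : Matrix (Fin 2) (Fin 2) K) = 1)
    (hdisc : (trace (U : Matrix (Fin 2) (Fin 2) K))^2 ≠ 4) (p q r : ℤ)
    (hB : 1 - gp U p + gp U q - gp U r = 0) :
    (gp U p = 1 ∧ gp U (q - r) = 1) ∨ (gp U r = 1 ∧ gp U (q - p) = 1) ∨
    (gp U q = -1 ∧ gp U (r - p) = -1) := by
  have htB : gp U p + gp U r = 1 + gp U q := by
    rw [← sub_eq_zero]
    have e : gp U p + gp U r - (1 + gp U q) = -(1 - gp U p + gp U q - gp U r) := by abel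
    rw [e, hB, neg_zero]
  have htrace : (2:K) - trace (gp U p) + trace (gp U q) - trace (gp U r) = 0 := by
    have := congrArg Matrix.trace hB
    simpa [Matrix.trace_sub, Matrix.trace_add, Matrix.trace_one] using this
  have hR2 : 1 - gp U (-p) + gp U (-q) - gp U (-r) = 0 := by
    rw [gp_inv_eq U hdet p, gp_inv_eq U hdet q, gp_inv_eq U hdet r]
    have e : 1 - (trace (gp U p) • 1 - gp U p) + (trace (gp U q) • 1 - gp U q)
        - (trace (gp U r) • 1 - gp U r)
        = ((2:K) - trace (gp U p) + trace (gp U q) - trace (gp U r)) • 1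
          - (1 - gp U p + gp U q - gp U r) := by
      rw [sub_smul, add_smul, sub_smul, two_smul]
      abel
    rw [e, htrace, hB, zero_smul, sub_zero]
  have e1 : gp U (p+r) * gp U (-p) = gp U r := gp_mul_eq U _ _ _ (by ring)
  have e2 : gp U (p+r) * gp U (-q) = gp U (p+r-q) := gp_mul_eq U _ _ _ (by ring)
  have e3 : gp U (p+r) * gp U (-r) = gp U p := gp_mul_eq U _ _ _ (by ring)
  have hstar : gp U (p+r) - gp U r + gp U (p+r-q) - gp U p = 0 := by
    have h := congrArg (fun M => gp U (p+r) * M) hR2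
    simpa [mul_sub, mul_add, mul_one, e1, e2, e3] using h
  have e4 : gp U (p+r-q) * gp U q = gp U (p+r) := gp_mul_eq U _ _ _ (by ring)
  have h5 : gp U (p+r-q) + gp U (p+r) = gp U p + gp U r := by
    rw [← sub_eq_zero]
    have e : gp U (p+r-q) + gp U (p+r) - (gp U p + gp U r)
        = gp U (p+r) - gp U r + gp U (p+r-q) - gp U p := by abel
    rw [e, hstar]
  have huv : (gp U (p+r-q) - 1) * (1 + gp U q) = 0 := by
    have expand : (gp U (p+r-q) - 1) * (1 + gp U q)
        = gp U (p+r-q) + gp U (p+r) - (1 + gp U q) := by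
      rw [sub_mul, mul_add, mul_one, one_mul, e4]
    rw [expand, h5, htB, sub_self]
  rcases split2 hdet hdisc _ _ huv with hb | hq
  · -- gp (p+r-q) = 1, so gp(p+r) = gp q
    have hpr : gp U (p+r) = gp U q := by
      rw [← e4, hb, one_mul]
    have h6 : (gp U p - 1) * (gp U r - 1) = 0 := by
      have expand : (gp U p - 1) * (gp U r - 1)
          = gp U p * gp U r - gp U p - gp U r + 1 := by
        rw [sub_mul, mul_sub, mul_sub, mul_one, one_mul]
        simp only [one_mul]
        abel
      rw [expand, gp_mul_eq U p r (p+r) rfl, hpr]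
      have e : gp U q - gp U p - gp U r + 1 = (1 + gp U q) - (gp U p + gp U r) := by abel
      rw [e, htB, sub_self]
    rcases split1 hdet hdisc _ _ h6 with hp | hr
    · left
      refine ⟨hp, ?_⟩
      have hrq : gp U r = gp U q := by
        have h7 := htB
        rw [hp] at h7
        exact add_left_cancel h7
      have e : gp U (q - r) = gp U q * gp U (-r) := (gp_mul_eq U _ _ _ (by ring)).symm
      rw [e, ← hrq]
      exact gp_cancel U r
    · right; left
      refine ⟨hr, ?_⟩
      have hpq : gp U p = gp U q := by
        have h7 := htB
        rw [hr] at h7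
        have e : gp U p + 1 = 1 + gp U p := by abel
        rw [e] at h7
        exact add_left_cancel h7
      have e : gp U (q - p) = gp U q * gp U (-p) := (gp_mul_eq U _ _ _ (by ring)).symm
      rw [e, ← hpq]
      exact gp_cancel U p
  · -- gp q = -1
    right; right
    refine ⟨hq, ?_⟩
    have h9 : gp U r = -gp U p := by
      have h7 := htB
      rw [hq] at h7
      simp only [add_neg_cancel] at h7
      exact eq_neg_of_add_eq_zero_right h7
    have e : gp U (r - p) = gp U r * gp U (-p) := (gp_mul_eq U _ _ _ (by ring)).symm
    rw [e, h9, neg_mul, gp_cancel U p]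
end Heart2

section Ord
variable (A : Matrix (Fin 2) (Fin 2) ℤ)

/-- the order of A mod M, as defined via sInf -/
private noncomputable def matOrd' (M : ℕ) : ℕ :=
  sInf {k | 0 < k ∧ ∀ i j, (M : ℤ) ∣ (A ^ k - 1) i j}

private def Ahat (M : ℕ) : Matrix (Fin 2) (Fin 2) (ZMod M) :=
  (Int.castRingHom (ZMod M)).mapMatrix A

private lemma pow_cond_iff (M c : ℕ) :
    (∀ i j, (M:ℤ) ∣ (A ^ c - 1) i j) ↔ (Ahat A M)^c = 1 := by
  have k1 : (Ahat A M)^c - 1 = (Int.castRingHom (ZMod M)).mapMatrix (A^c - 1) := by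
    rw [Ahat, map_sub, map_pow, _root_.map_one]
  rw [← sub_eq_zero (b := (1 : Matrix (Fin 2) (Fin 2) (ZMod M)))]
  rw [k1]
  constructor
  · intro h
    ext i j
    rw [RingHom.mapMatrix_apply, Matrix.map_apply, Matrix.zero_apply]
    simp only [Int.coe_castRingHom, ZMod.intCast_zmod_eq_zero_iff_dvd]
    exact h i j
  · intro h i j
    have h2 := congrFun (congrFun h i) j
    rw [RingHom.mapMatrix_apply, Matrix.map_apply, Matrix.zero_apply] at h2
    simp only [Int.coe_castRingHom, ZMod.intCast_zmod_eq_zero_iff_dvd] at h2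
    exact h2

private lemma isUnit_Ahat (hdet : A.det = 1) (M : ℕ) : IsUnit (Ahat A M) := by
  rw [Matrix.isUnit_iff_isUnit_det]
  have h : (Ahat A M).det = 1 := by
    rw [Ahat, ← RingHom.map_det, hdet]
    simp
  rw [h]; exact isUnit_one

private lemma orderOf_Ahat_pos (hdet : A.det = 1) (M : ℕ) [NeZero M] :
    0 < orderOf (Ahat A M) := by
  obtain ⟨u, hu⟩ := isUnit_Ahat A hdet M
  rw [← hu, orderOf_units]
  exact orderOf_pos u

private lemma matOrd_eq_orderOf (hdet : A.det = 1) (M : ℕ) [NeZero M] :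
    matOrd' A M = orderOf (Ahat A M) := by
  have hmem : orderOf (Ahat A M) ∈ {k | 0 < k ∧ ∀ i j, (M:ℤ) ∣ (A^k - 1) i j} :=
    ⟨orderOf_Ahat_pos A hdet M, (pow_cond_iff A M _).mpr (pow_orderOf_eq_one _)⟩
  apply le_antisymm
  · exact Nat.sInf_le hmem
  · have h2 := Nat.sInf_mem (⟨_, hmem⟩ : {k | 0 < k ∧ ∀ i j, (M:ℤ) ∣ (A^k - 1) i j}.Nonempty)
    exact orderOf_le_of_pow_eq_one h2.1 ((pow_cond_iff A M _).mp h2.2)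

private lemma matOrd_dvd_iff (hdet : A.det = 1) (M : ℕ) [NeZero M] (c : ℕ) :
    matOrd' A M ∣ c ↔ ∀ i j, (M:ℤ) ∣ (A^c - 1) i j := by
  rw [matOrd_eq_orderOf A hdet M, pow_cond_iff, orderOf_dvd_iff_pow_eq_one]

private lemma matOrd_pos (hdet : A.det = 1) (M : ℕ) [NeZero M] : 0 < matOrd' A M := by
  rw [matOrd_eq_orderOf A hdet M]; exact orderOf_Ahat_pos A hdet M

private lemma matOrd_prime_dvd (hdet : A.det = 1) {N : ℕ} [NeZero N] {p : ℕ}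
    (hp : p ∈ N.primeFactors) : matOrd' A p ∣ matOrd' A N := by
  haveI : NeZero p := ⟨(Nat.prime_of_mem_primeFactors hp).ne_zero⟩
  rw [matOrd_dvd_iff A hdet p]
  intro i j
  have h1 := (matOrd_dvd_iff A hdet N (matOrd' A N)).mp dvd_rfl i j
  exact dvd_trans (Int.natCast_dvd_natCast.mpr (Nat.dvd_of_mem_primeFactors hp)) h1

private lemma matOrd_dvd_of_forall_prime (hdet : A.det = 1) {N : ℕ} (hsqf : Squarefree N)
    (c : ℕ) (h : ∀ p ∈ N.primeFactors, matOrd' A p ∣ c) : matOrd' A N ∣ c := by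
  haveI : NeZero N := ⟨hsqf.ne_zero⟩
  rw [matOrd_dvd_iff A hdet N c]
  intro i j
  set z := (A^c - 1) i j with hz
  have hzp : ∀ p ∈ N.primeFactors, p ∣ z.natAbs := by
    intro p hp
    haveI : NeZero p := ⟨(Nat.prime_of_mem_primeFactors hp).ne_zero⟩
    have h1 := (matOrd_dvd_iff A hdet p c).mp (h p hp) i j
    have h2 : ((p:ℤ)).natAbs ∣ z.natAbs := Int.natAbs_dvd_natAbs.mpr h1
    simpa using h2
  have hN : N ∣ z.natAbs := by
    rw [← Nat.prod_primeFactors_of_squarefree hsqf]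
    exact Finset.prod_primes_dvd _
      (fun p hp => (Nat.prime_of_mem_primeFactors hp).prime) hzp
  have : (N:ℤ) ∣ (z.natAbs : ℤ) := Int.natCast_dvd_natCast.mpr hN
  exact dvd_trans this (Int.natAbs_dvd.mpr dvd_rfl)

end Ord

section Glue
variable (A : Matrix (Fin 2) (Fin 2) ℤ)

open scoped Classical in
private noncomputable def Ufd (p : ℕ) : (Matrix (Fin 2) (Fin 2) (ZMod p))ˣ :=
  if h : IsUnit (Ahat A p) then h.unit else 1

private lemma Ufd_val (hA : A.det = 1) (p : ℕ) :
    ((Ufd A p) : Matrix (Fin 2) (Fin 2) (ZMod p)) = Ahat A p := by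
  rw [Ufd, dif_pos (isUnit_Ahat A hA p)]
  exact (isUnit_Ahat A hA p).unit_spec

open scoped Classical in
private noncomputable def hoff (p : ℕ) : ℤ :=
  if hh : ∃ e : ℤ, gp (Ufd A p) e = -1 then Classical.choose hh else 0

private lemma det_Ahat (hA : A.det = 1) (M : ℕ) : (Ahat A M).det = 1 := by
  rw [Ahat, ← RingHom.map_det, hA]; simp

private lemma trace_Ahat (M : ℕ) : (Ahat A M).trace = ((A.trace : ℤ) : ZMod M) := by
  rw [Matrix.trace_fin_two, Matrix.trace_fin_two]
  simp [Ahat, RingHom.mapMatrix_apply, Matrix.map_apply]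

private lemma vecMul_cast (M : ℕ) (v : Fin 2 → ℤ) (B : Matrix (Fin 2) (Fin 2) ℤ) (m : Fin 2) :
    ((Matrix.vecMul v B m : ℤ) : ZMod M) =
      Matrix.vecMul (fun x => ((v x : ZMod M))) (B.map (Int.cast : ℤ → ZMod M)) m := by
  simp [Matrix.vecMul, dotProduct, Fin.sum_univ_two, Matrix.map_apply]

private lemma classify (hA : A.det = 1) {N : ℕ} [NeZero N]
    (hcop : Nat.Coprime N (4 * (A.trace ^ 2 - 4)).natAbs)
    (n : Fin 2 → ℤ) {p : ℕ} (hpN : p ∈ N.primeFactors)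
    (hli : LinearIndependent (ZMod p)
      ![fun i => ((n i : ZMod p)), fun i => (((Matrix.vecMul n A i : ℤ) : ZMod p))])
    (i j k l : ℕ)
    (hq : ∀ m, (N:ℤ) ∣ Matrix.vecMul n (A^i - A^j + A^k - A^l) m) :
    ((matOrd' A p:ℤ) ∣ ((i:ℤ) - j) ∧ (matOrd' A p:ℤ) ∣ ((k:ℤ) - l)) ∨
    ((matOrd' A p:ℤ) ∣ ((i:ℤ) - l) ∧ (matOrd' A p:ℤ) ∣ ((k:ℤ) - j)) ∨
    ((matOrd' A p:ℤ) ∣ ((k:ℤ) - i - hoff A p) ∧ (matOrd' A p:ℤ) ∣ ((l:ℤ) - j - hoff A p)) := by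
  have hp : p.Prime := Nat.prime_of_mem_primeFactors hpN
  haveI : Fact p.Prime := ⟨hp⟩
  haveI : NeZero p := ⟨hp.ne_zero⟩
  have hUv : ((Ufd A p) : Matrix (Fin 2) (Fin 2) (ZMod p)) = Ahat A p := Ufd_val A hA p
  have hvp : ∀ m, (p:ℤ) ∣ Matrix.vecMul n (A^i - A^j + A^k - A^l) m := fun m =>
    dvd_trans (Int.natCast_dvd_natCast.mpr (Nat.dvd_of_mem_primeFactors hpN)) (hq m)
  set v0 : Fin 2 → ZMod p := fun x => ((n x : ZMod p)) with hv0
  have hmap : (A^i - A^j + A^k - A^l).map (Int.cast : ℤ → ZMod p) =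
      (Ahat A p)^i - (Ahat A p)^j + (Ahat A p)^k - (Ahat A p)^l := by
    have h0 : (A^i - A^j + A^k - A^l).map (Int.cast : ℤ → ZMod p)
        = (Int.castRingHom (ZMod p)).mapMatrix (A^i - A^j + A^k - A^l) := rfl
    rw [h0, map_sub, map_add, map_sub, map_pow, map_pow, map_pow, map_pow]
    rfl
  have hvB : Matrix.vecMul v0 ((Ahat A p)^i - (Ahat A p)^j + (Ahat A p)^k - (Ahat A p)^l) = 0 := by
    funext m
    simp only [Pi.zero_apply]
    rw [← hmap, ← vecMul_cast]
    rw [ZMod.intCast_zmod_eq_zero_iff_dvd]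
    exact hvp m
  set v1 : Fin 2 → ZMod p := Matrix.vecMul v0 (Ahat A p) with hv1
  have hv1B : Matrix.vecMul v1 ((Ahat A p)^i - (Ahat A p)^j + (Ahat A p)^k - (Ahat A p)^l) = 0 := by
    rw [hv1, Matrix.vecMul_vecMul]
    have hcX : ∀ c : ℕ, Ahat A p * (Ahat A p)^c = (Ahat A p)^c * Ahat A p :=
      fun c => ((Commute.refl (Ahat A p)).pow_right c)
    have hcomm : Ahat A p * ((Ahat A p)^i - (Ahat A p)^j + (Ahat A p)^k - (Ahat A p)^l)
        = ((Ahat A p)^i - (Ahat A p)^j + (Ahat A p)^k - (Ahat A p)^l) * Ahat A p := by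
      simp only [mul_sub, sub_mul, mul_add, add_mul, hcX i, hcX j, hcX k, hcX l]
    rw [hcomm, ← Matrix.vecMul_vecMul, hvB, Matrix.zero_vecMul]
  have hvv1 : v1 = fun x => (((Matrix.vecMul n A x : ℤ) : ZMod p)) := by
    funext m
    rw [hv1, vecMul_cast]
    rfl
  have hdetv : v0 0 * v1 1 - v0 1 * v1 0 ≠ 0 := by
    rw [linearIndependent_fin2] at hli
    obtain ⟨hne, hsc⟩ := hli
    simp only [Matrix.cons_val_one, Matrix.head_cons, Matrix.cons_val_zero] at hne hsc
    rw [← hvv1] at hne hsc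
    intro hdet0
    by_cases h10 : v1 0 = 0
    · have h11 : v1 1 ≠ 0 := by
        intro h11
        apply hne; funext x; fin_cases x
        · exact h10
        · exact h11
      have hv00 : v0 0 = 0 := by
        rw [h10, mul_zero, sub_zero, mul_eq_zero] at hdet0
        rcases hdet0 with h | h
        · exact h
        · exact absurd h h11
      apply hsc (v0 1 / v1 1)
      funext x; fin_cases x
      · show (v0 1 / v1 1) * v1 0 = v0 0; rw [h10, hv00, mul_zero]
      · show (v0 1 / v1 1) * v1 1 = v0 1; field_simp
    · apply hsc (v0 0 / v1 0)
      funext x; fin_cases x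
      · show (v0 0 / v1 0) * v1 0 = v0 0; field_simp
      · show (v0 0 / v1 0) * v1 1 = v0 1
        rw [div_mul_eq_mul_div, div_eq_iff h10]
        linear_combination hdet0
  have hB0 : (Ahat A p)^i - (Ahat A p)^j + (Ahat A p)^k - (Ahat A p)^l = 0 := by
    ext r m
    set B' := (Ahat A p)^i - (Ahat A p)^j + (Ahat A p)^k - (Ahat A p)^l with hB'
    have h0 : v0 0 * B' 0 m + v0 1 * B' 1 m = 0 := by
      have := congrFun hvB m
      simpa [Matrix.vecMul, dotProduct, Fin.sum_univ_two] using this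
    have h1 : v1 0 * B' 0 m + v1 1 * B' 1 m = 0 := by
      have := congrFun hv1B m
      simpa [Matrix.vecMul, dotProduct, Fin.sum_univ_two] using this
    have hc0 : B' 0 m * (v0 0 * v1 1 - v0 1 * v1 0) = 0 := by
      linear_combination v1 1 * h0 - v0 1 * h1
    have hc1 : B' 1 m * (v0 0 * v1 1 - v0 1 * v1 0) = 0 := by
      linear_combination v0 0 * h1 - v1 0 * h0
    have e0 : B' 0 m = 0 := by
      rcases mul_eq_zero.mp hc0 with h | h
      · exact h
      · exact absurd h hdetv
    have e1 : B' 1 m = 0 := by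
      rcases mul_eq_zero.mp hc1 with h | h
      · exact h
      · exact absurd h hdetv
    fin_cases r
    · simpa using e0
    · simpa using e1
  -- move to gp form
  have gnat : ∀ c : ℕ, gp (Ufd A p) (c:ℤ) = (Ahat A p)^c := by
    intro c
    rw [gp, zpow_natCast, Units.val_pow_eq_pow_val, hUv]
  have hgB : 1 - gp (Ufd A p) ((j:ℤ)-i) + gp (Ufd A p) ((k:ℤ)-i) - gp (Ufd A p) ((l:ℤ)-i) = 0 := by
    have h := congrArg (fun Mx => gp (Ufd A p) (-(i:ℤ)) * Mx) hB0
    simp only [mul_sub, mul_add, mul_zero] at h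
    rw [← gnat i, ← gnat j, ← gnat k, ← gnat l] at h
    rw [gp_mul_eq (Ufd A p) _ _ 0 (by ring), gp_mul_eq (Ufd A p) _ _ ((j:ℤ)-i) (by ring),
        gp_mul_eq (Ufd A p) _ _ ((k:ℤ)-i) (by ring), gp_mul_eq (Ufd A p) _ _ ((l:ℤ)-i) (by ring),
        gp_zero] at h
    exact h
  have hdetU : det ((Ufd A p) : Matrix (Fin 2) (Fin 2) (ZMod p)) = 1 := by
    rw [hUv]; exact det_Ahat A hA p
  have hdiscU : (trace ((Ufd A p) : Matrix (Fin 2) (Fin 2) (ZMod p)))^2 ≠ 4 := by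
    rw [hUv, trace_Ahat]
    intro hcontra
    have hz : (((A.trace^2 - 4 : ℤ)) : ZMod p) = 0 := by
      push_cast
      rw [hcontra]
      ring
    rw [ZMod.intCast_zmod_eq_zero_iff_dvd] at hz
    have hz4 : (p:ℤ) ∣ 4 * (A.trace^2 - 4) := Dvd.dvd.mul_left hz 4
    have hpX : p ∣ (4 * (A.trace^2 - 4)).natAbs := by
      have := Int.natAbs_dvd_natAbs.mpr hz4
      simpa using this
    have hpN' : p ∣ N := Nat.dvd_of_mem_primeFactors hpN
    have hp1 : p ∣ 1 := hcop ▸ Nat.dvd_gcd hpN' hpX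
    exact hp.one_lt.ne' (Nat.dvd_one.mp hp1)
  have horder : ∀ e : ℤ, gp (Ufd A p) e = 1 → ((matOrd' A p : ℕ):ℤ) ∣ e := by
    intro e he
    have hUe : (Ufd A p)^e = 1 := by
      apply Units.ext
      rw [← gp]  -- ↑((Ufd A p)^e) = gp (Ufd A p) e
      rw [he, Units.val_one]
    have ho : orderOf (Ufd A p) = matOrd' A p := by
      rw [← orderOf_units, hUv, matOrd_eq_orderOf A hA p]
    rw [← ho]
    exact orderOf_dvd_iff_zpow_eq_one.mpr hUe
  rcases heart hdetU hdiscU ((j:ℤ)-i) ((k:ℤ)-i) ((l:ℤ)-i) hgB with ⟨h1, h2⟩ | ⟨h1, h2⟩ | ⟨h1, h2⟩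
  · left
    constructor
    · have hd := horder _ h1
      have e : (i:ℤ) - j = -((j:ℤ)-i) := by ring
      rw [e]
      exact dvd_neg.mpr hd
    · have e2 : ((k:ℤ)-i) - ((l:ℤ)-i) = (k:ℤ)-l := by ring
      rw [e2] at h2
      exact horder _ h2
  · right; left
    constructor
    · have hd := horder _ h1
      have e : (i:ℤ) - l = -((l:ℤ)-i) := by ring
      rw [e]
      exact dvd_neg.mpr hd
    · have e2 : ((k:ℤ)-i) - ((j:ℤ)-i) = (k:ℤ)-j := by ring
      rw [e2] at h2
      exact horder _ h2
  · right; right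
    have e2 : ((l:ℤ)-i) - ((j:ℤ)-i) = (l:ℤ)-j := by ring
    rw [e2] at h2
    have hex : ∃ e : ℤ, gp (Ufd A p) e = -1 := ⟨(k:ℤ)-i, h1⟩
    have hspec : gp (Ufd A p) (hoff A p) = -1 := by
      rw [hoff, dif_pos hex]
      exact Classical.choose_spec hex
    have hneg : gp (Ufd A p) (-(hoff A p)) = -1 := by
      have hcan := gp_cancel (Ufd A p) (hoff A p)
      rw [hspec, neg_one_mul] at hcan
      simpa using congrArg Neg.neg hcan
    constructor
    · apply horder
      have e3 : gp (Ufd A p) ((k:ℤ)-i-hoff A p)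
          = gp (Ufd A p) ((k:ℤ)-i) * gp (Ufd A p) (-(hoff A p)) :=
        (gp_mul_eq (Ufd A p) _ _ _ (by ring)).symm
      rw [e3, h1, hneg, neg_one_mul, neg_neg]
    · apply horder
      have e3 : gp (Ufd A p) ((l:ℤ)-j-hoff A p)
          = gp (Ufd A p) ((l:ℤ)-j) * gp (Ufd A p) (-(hoff A p)) :=
        (gp_mul_eq (Ufd A p) _ _ _ (by ring)).symm
      rw [e3, h2, hneg, neg_one_mul, neg_neg]

end Glue

section Count

private lemma lcm_int_dvd {β : Type*} (s : Finset β) (f : β → ℕ) (z : ℤ)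
    (h : ∀ x ∈ s, (f x : ℤ) ∣ z) : ((s.lcm f : ℕ) : ℤ) ∣ z := by
  have h1 : ∀ x ∈ s, f x ∣ z.natAbs := by
    intro x hx
    have := Int.natAbs_dvd_natAbs.mpr (h x hx)
    simpa using this
  have h2 : s.lcm f ∣ z.natAbs := Finset.lcm_dvd h1
  exact dvd_trans (Int.natCast_dvd_natCast.mpr h2) (Int.natAbs_dvd.mpr dvd_rfl)

private lemma nat_eq_of_div_mod {L a b : ℕ} (hL : 0 < L) (hab : (L:ℤ) ∣ (a:ℤ) - b)
    (hq : (a-1)/L = (b-1)/L) (ha : 1 ≤ a) (hb : 1 ≤ b) : a = b := by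
  have hmod : a ≡ b [MOD L] := by
    rw [Nat.modEq_iff_dvd]
    have e : (b:ℤ) - a = -((a:ℤ) - b) := by ring
    rw [e]
    exact dvd_neg.mpr hab
  have hmod' : a - 1 ≡ b - 1 [MOD L] := by
    apply Nat.ModEq.add_right_cancel' 1
    rw [Nat.sub_add_cancel ha, Nat.sub_add_cancel hb]
    exact hmod
  have e1 := Nat.div_add_mod (a-1) L
  have e2 := Nat.div_add_mod (b-1) L
  have : a - 1 = b - 1 := by
    rw [← e1, ← e2, hq, hmod']
  omega

end Count

end Helpers

/-- Counting lemma, squarefree modulus coprime to `D_A = 4(tr(A)² - 4)`: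
if `n` and `nA` are independent mod every prime `p ∣ N`, the number of
solutions of `n(A^i - A^j + A^k - A^l) ≡ 0 (mod N)`, `1 ≤ i,j,k,l ≤ ord(A,N)`,
is at most `3^{ω(N)} ord(A,N)²`. -/
theorem count_squarefree_coprime
    (A : Matrix (Fin 2) (Fin 2) ℤ) (hA : A.det = 1) (htr : 2 < |A.trace|)
    (n : Fin 2 → ℤ) (N : ℕ) (hsqf : Squarefree N)
    (hcop : Nat.Coprime N (4 * (A.trace ^ 2 - 4)).natAbs)
    (hind : ∀ p : ℕ, p.Prime → p ∣ N → LinearIndependent (ZMod p)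
      ![fun i => ((n i : ZMod p)), fun i => (((Matrix.vecMul n A i : ℤ) : ZMod p))]) :
    nu A N n ≤ 3 ^ N.primeFactors.card * (matOrd A N) ^ 2 := by
  classical
  haveI : NeZero N := ⟨hsqf.ne_zero⟩
  have hT' : ∀ M : ℕ, matOrd A M = matOrd' A M := fun _ => rfl
  set T := matOrd A N with hTdef
  have hTpos : 0 < T := by rw [hTdef, hT' N]; exact matOrd_pos A hA N
  set Icc4 : Finset (ℕ×ℕ×ℕ×ℕ) :=
    (Finset.Icc 1 T) ×ˢ ((Finset.Icc 1 T) ×ˢ ((Finset.Icc 1 T) ×ˢ (Finset.Icc 1 T))) with hIcc4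
  set Q : Finset (ℕ×ℕ×ℕ×ℕ) := Icc4.filter
    (fun q => ∀ m, (N:ℤ) ∣ Matrix.vecMul n (A ^ q.1 - A ^ q.2.1 + A ^ q.2.2.1 - A ^ q.2.2.2) m)
    with hQdef
  have hnu : nu A N n = Q.card := by
    rw [nu, ← Set.ncard_coe_finset]
    congr 1
    ext q
    simp only [hQdef, Finset.coe_filter, Set.mem_setOf_eq, hIcc4, Finset.mem_product, ← hTdef]
    tauto
  -- classification per prime
  have hclassQ : ∀ q ∈ Q, ∀ p ∈ N.primeFactors,
      ((matOrd' A p:ℤ) ∣ ((q.1:ℤ) - q.2.1) ∧ (matOrd' A p:ℤ) ∣ ((q.2.2.1:ℤ) - q.2.2.2)) ∨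
      ((matOrd' A p:ℤ) ∣ ((q.1:ℤ) - q.2.2.2) ∧ (matOrd' A p:ℤ) ∣ ((q.2.2.1:ℤ) - q.2.1)) ∨
      ((matOrd' A p:ℤ) ∣ ((q.2.2.1:ℤ) - q.1 - hoff A p) ∧
        (matOrd' A p:ℤ) ∣ ((q.2.2.2:ℤ) - q.2.1 - hoff A p)) := by
    intro q hq p hp
    have hcond := (Finset.mem_filter.mp hq).2
    exact classify A hA hcop n hp
      (hind p (Nat.prime_of_mem_primeFactors hp) (Nat.dvd_of_mem_primeFactors hp))
      q.1 q.2.1 q.2.2.1 q.2.2.2 hcond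
  set PP := {x // x ∈ N.primeFactors} with hPP
  set G : (PP → Fin 3) → Finset (ℕ×ℕ×ℕ×ℕ) := fun σ =>
    Q.filter (fun q => ∀ x : PP,
      (σ x = 0 → ((matOrd' A (x:ℕ):ℤ) ∣ ((q.1:ℤ) - q.2.1) ∧
        (matOrd' A (x:ℕ):ℤ) ∣ ((q.2.2.1:ℤ) - q.2.2.2))) ∧
      (σ x = 1 → ((matOrd' A (x:ℕ):ℤ) ∣ ((q.1:ℤ) - q.2.2.2) ∧
        (matOrd' A (x:ℕ):ℤ) ∣ ((q.2.2.1:ℤ) - q.2.1))) ∧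
      (σ x = 2 → ((matOrd' A (x:ℕ):ℤ) ∣ ((q.2.2.1:ℤ) - q.1 - hoff A (x:ℕ)) ∧
        (matOrd' A (x:ℕ):ℤ) ∣ ((q.2.2.2:ℤ) - q.2.1 - hoff A (x:ℕ))))) with hGdef
  have hQsub : Q ⊆ Finset.univ.biUnion G := by
    intro q hq
    rw [Finset.mem_biUnion]
    have hexist : ∀ x : PP, ∃ t : Fin 3,
        (t = 0 → ((matOrd' A (x:ℕ):ℤ) ∣ ((q.1:ℤ) - q.2.1) ∧
          (matOrd' A (x:ℕ):ℤ) ∣ ((q.2.2.1:ℤ) - q.2.2.2))) ∧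
        (t = 1 → ((matOrd' A (x:ℕ):ℤ) ∣ ((q.1:ℤ) - q.2.2.2) ∧
          (matOrd' A (x:ℕ):ℤ) ∣ ((q.2.2.1:ℤ) - q.2.1))) ∧
        (t = 2 → ((matOrd' A (x:ℕ):ℤ) ∣ ((q.2.2.1:ℤ) - q.1 - hoff A (x:ℕ)) ∧
          (matOrd' A (x:ℕ):ℤ) ∣ ((q.2.2.2:ℤ) - q.2.1 - hoff A (x:ℕ)))) := by
      intro x
      rcases hclassQ q hq (x:ℕ) x.2 with h | h | h
      · exact ⟨0, fun _ => h, fun hc => absurd hc (by decide), fun hc => absurd hc (by decide)⟩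
      · exact ⟨1, fun hc => absurd hc (by decide), fun _ => h, fun hc => absurd hc (by decide)⟩
      · exact ⟨2, fun hc => absurd hc (by decide), fun hc => absurd hc (by decide), fun _ => h⟩
    choose σ hσ using hexist
    exact ⟨σ, Finset.mem_univ _, Finset.mem_filter.mpr ⟨hq, hσ⟩⟩
  -- per-σ cardinality bound
  have hGbound : ∀ σ : PP → Fin 3, (G σ).card ≤ T^2 := by
    intro σ
    set S3 := Finset.univ.filter (fun x : PP => σ x = 2) with hS3
    set S12 := Finset.univ.filter (fun x : PP => ¬ (σ x = 2)) with hS12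
    set L3 := S3.lcm (fun x => matOrd' A (x:ℕ)) with hL3
    set L12 := S12.lcm (fun x => matOrd' A (x:ℕ)) with hL12
    have htpT : ∀ x : PP, matOrd' A (x:ℕ) ∣ matOrd' A N := fun x => matOrd_prime_dvd A hA x.2
    have hL3T : L3 ∣ T := by rw [hTdef, hT' N]; exact Finset.lcm_dvd (fun b _ => htpT b)
    have hL12T : L12 ∣ T := by rw [hTdef, hT' N]; exact Finset.lcm_dvd (fun b _ => htpT b)
    have hTL : T ∣ L3 * L12 := by
      rw [hTdef, hT' N]
      apply matOrd_dvd_of_forall_prime A hA hsqf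
      intro p hp
      by_cases hσ : σ ⟨p, hp⟩ = 2
      · exact dvd_mul_of_dvd_left
          (Finset.dvd_lcm (s := S3) (f := fun x => matOrd' A (x:ℕ)) (b := ⟨p, hp⟩)
            (Finset.mem_filter.mpr ⟨Finset.mem_univ _, hσ⟩)) _
      · exact dvd_mul_of_dvd_right
          (Finset.dvd_lcm (s := S12) (f := fun x => matOrd' A (x:ℕ)) (b := ⟨p, hp⟩)
            (Finset.mem_filter.mpr ⟨Finset.mem_univ _, hσ⟩)) _
    obtain ⟨m3, hm3⟩ := hL3T
    obtain ⟨m12, hm12⟩ := hL12T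
    have hL3pos : 0 < L3 := by
      rcases Nat.eq_zero_or_pos L3 with h | h
      · rw [h, zero_mul] at hm3; omega
      · exact h
    have hL12pos : 0 < L12 := by
      rcases Nat.eq_zero_or_pos L12 with h | h
      · rw [h, zero_mul] at hm12; omega
      · exact h
    have hmm' : m3 * m12 ≤ T := by
      obtain ⟨dd, hdd⟩ := hTL
      have hTT : T * T = T * (dd * (m3 * m12)) := by
        calc T * T = (L3 * m3) * (L12 * m12) := by rw [← hm3, ← hm12]
        _ = (L3 * L12) * (m3 * m12) := by ring
        _ = (T * dd) * (m3 * m12) := by rw [← hdd]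
        _ = T * (dd * (m3 * m12)) := by ring
      have h2 : T = dd * (m3 * m12) := Nat.eq_of_mul_eq_mul_left hTpos hTT
      exact Nat.le_of_dvd hTpos ⟨dd, by rw [h2]; ring⟩
    -- the injection
    have hmem : ∀ q ∈ G σ,
        (fun q : ℕ×ℕ×ℕ×ℕ => (q.1, (q.2.2.1 - 1)/L3, (q.2.1 - 1)/L12)) q ∈
        (Finset.Icc 1 T) ×ˢ (Finset.range m3 ×ˢ Finset.range m12) := by
      intro q hq
      have hqQ : q ∈ Q := (Finset.mem_filter.mp hq).1
      have hqI := (Finset.mem_filter.mp hqQ).1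
      rw [hIcc4, Finset.mem_product, Finset.mem_product, Finset.mem_product] at hqI
      have hi := hqI.1
      have hj := hqI.2.1
      have hk := hqI.2.2.1
      have hl := hqI.2.2.2
      rw [Finset.mem_Icc] at hi hj hk hl
      rw [Finset.mem_product, Finset.mem_product]
      refine ⟨by rw [Finset.mem_Icc]; exact hi, ?_, ?_⟩
      · rw [Finset.mem_range]
        have h1 : (q.2.2.1 - 1)/L3 < T/L3 :=
          Nat.div_lt_div_of_lt_of_dvd ⟨m3, hm3⟩ (by omega)
        rwa [hm3, Nat.mul_div_cancel_left m3 hL3pos] at h1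
      · rw [Finset.mem_range]
        have h1 : (q.2.1 - 1)/L12 < T/L12 :=
          Nat.div_lt_div_of_lt_of_dvd ⟨m12, hm12⟩ (by omega)
        rwa [hm12, Nat.mul_div_cancel_left m12 hL12pos] at h1
    have hinj : Set.InjOn (fun q : ℕ×ℕ×ℕ×ℕ => (q.1, (q.2.2.1 - 1)/L3, (q.2.1 - 1)/L12))
        ↑(G σ) := by
      rintro ⟨i1, j1, k1, l1⟩ hq1 ⟨i2, j2, k2, l2⟩ hq2 heq
      simp only [Prod.mk.injEq] at heq
      obtain ⟨hi, hkq, hjq⟩ := heq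
      have hm1 := Finset.mem_filter.mp (Finset.mem_coe.mp hq1)
      have hm2 := Finset.mem_filter.mp (Finset.mem_coe.mp hq2)
      have hc1 := hm1.2
      have hc2 := hm2.2
      have hb1 := (Finset.mem_filter.mp hm1.1).1
      have hb2 := (Finset.mem_filter.mp hm2.1).1
      rw [hIcc4, Finset.mem_product, Finset.mem_product, Finset.mem_product] at hb1 hb2
      simp only [Finset.mem_Icc] at hb1 hb2
      -- k1 = k2
      have hk : k1 = k2 := by
        apply nat_eq_of_div_mod hL3pos ?_ hkq (by exact hb1.2.2.1.1) (by exact hb2.2.2.1.1)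
        apply lcm_int_dvd S3 (fun x => matOrd' A (x:ℕ))
        intro x hx
        have hσx : σ x = 2 := (Finset.mem_filter.mp hx).2
        have d1 := (hc1 x).2.2 hσx
        have d2 := (hc2 x).2.2 hσx
        have e : (k1:ℤ) - k2 = ((k1:ℤ) - i1 - hoff A (x:ℕ)) - ((k2:ℤ) - i2 - hoff A (x:ℕ))
            + ((i1:ℤ) - i2) := by ring
        rw [e]
        have hii : (i1:ℤ) - i2 = 0 := by rw [hi]; ring
        rw [hii, add_zero]
        exact dvd_sub d1.1 d2.1
      -- j1 = j2
      have hj : j1 = j2 := by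
        apply nat_eq_of_div_mod hL12pos ?_ hjq (by exact hb1.2.1.1) (by exact hb2.2.1.1)
        apply lcm_int_dvd S12 (fun x => matOrd' A (x:ℕ))
        intro x hx
        have hσx : ¬ (σ x = 2) := (Finset.mem_filter.mp hx).2
        have h01 : σ x = 0 ∨ σ x = 1 := by
          have hlt := (σ x).isLt
          have hne : (σ x).val ≠ 2 := fun hc => hσx (Fin.ext hc)
          have hcases : (σ x).val = 0 ∨ (σ x).val = 1 := by omega
          rcases hcases with h | h
          · exact Or.inl (Fin.ext h)
          · exact Or.inr (Fin.ext h)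
        rcases h01 with h0 | h1
        · have d1 := (hc1 x).1 h0
          have d2 := (hc2 x).1 h0
          have e : (j1:ℤ) - j2 = ((i2:ℤ) - j2) - ((i1:ℤ) - j1) + ((i1:ℤ) - i2) := by ring
          rw [e, show (i1:ℤ) - i2 = 0 by rw [hi]; ring, add_zero]
          exact dvd_sub d2.1 d1.1
        · have d1 := (hc1 x).2.1 h1
          have d2 := (hc2 x).2.1 h1
          have e : (j1:ℤ) - j2 = ((k2:ℤ) - j2) - ((k1:ℤ) - j1) + ((k1:ℤ) - k2) := by ring
          rw [e, show (k1:ℤ) - k2 = 0 by rw [hk]; ring, add_zero]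
          exact dvd_sub d2.2 d1.2
      -- l1 = l2
      have hl : l1 = l2 := by
        have hdvdT : (T:ℤ) ∣ (l1:ℤ) - l2 := by
          have hTall : T ∣ Finset.univ.lcm (fun x : PP => matOrd' A (x:ℕ)) := by
            rw [hTdef, hT' N]
            apply matOrd_dvd_of_forall_prime A hA hsqf
            intro p hp
            exact Finset.dvd_lcm (Finset.mem_univ (⟨p, hp⟩ : PP))
          have hall : ((Finset.univ.lcm (fun x : PP => matOrd' A (x:ℕ)) : ℕ) : ℤ) ∣
              (l1:ℤ) - l2 := by
            apply lcm_int_dvd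
            intro x _
            have hlt := (σ x).isLt
            have hcases : (σ x).val = 0 ∨ (σ x).val = 1 ∨ (σ x).val = 2 := by omega
            rcases hcases with h | h | h
            · have d1 := (hc1 x).1 (Fin.ext h)
              have d2 := (hc2 x).1 (Fin.ext h)
              have e : (l1:ℤ) - l2 = ((k2:ℤ) - l2) - ((k1:ℤ) - l1) + ((k1:ℤ) - k2) := by ring
              rw [e, show (k1:ℤ) - k2 = 0 by rw [hk]; ring, add_zero]
              exact dvd_sub d2.2 d1.2
            · have d1 := (hc1 x).2.1 (Fin.ext h)
              have d2 := (hc2 x).2.1 (Fin.ext h)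
              have e : (l1:ℤ) - l2 = ((i2:ℤ) - l2) - ((i1:ℤ) - l1) + ((i1:ℤ) - i2) := by ring
              rw [e, show (i1:ℤ) - i2 = 0 by rw [hi]; ring, add_zero]
              exact dvd_sub d2.1 d1.1
            · have d1 := (hc1 x).2.2 (Fin.ext h)
              have d2 := (hc2 x).2.2 (Fin.ext h)
              have e : (l1:ℤ) - l2 = ((l1:ℤ) - j1 - hoff A (x:ℕ)) - ((l2:ℤ) - j2 - hoff A (x:ℕ))
                  + ((j1:ℤ) - j2) := by ring
              rw [e, show (j1:ℤ) - j2 = 0 by rw [hj]; ring, add_zero]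
              exact dvd_sub d1.2 d2.2
          exact dvd_trans (Int.natCast_dvd_natCast.mpr hTall) hall
        have habs : |(l1:ℤ) - l2| < (T:ℤ) := by
          have hbl1 := hb1.2.2.2
          have hbl2 := hb2.2.2.2
          rw [abs_lt]
          omega
        have := Int.eq_zero_of_abs_lt_dvd hdvdT habs
        omega
      simp only [Prod.mk.injEq]
      exact ⟨hi, hj, hk, hl⟩
    have hcard := Finset.card_le_card_of_injOn _ hmem hinj
    have htarget : ((Finset.Icc 1 T) ×ˢ (Finset.range m3 ×ˢ Finset.range m12)).card
        = T * (m3 * m12) := by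
      rw [Finset.card_product, Finset.card_product, Nat.card_Icc, Finset.card_range,
        Finset.card_range]
      have e : T + 1 - 1 = T := by omega
      rw [e]
    rw [htarget] at hcard
    calc (G σ).card ≤ T * (m3 * m12) := hcard
      _ ≤ T * T := Nat.mul_le_mul_left T hmm'
      _ = T^2 := by ring
  -- assemble
  calc nu A N n = Q.card := hnu
    _ ≤ (Finset.univ.biUnion G).card := Finset.card_le_card hQsub
    _ ≤ ∑ σ : PP → Fin 3, (G σ).card := Finset.card_biUnion_le
    _ ≤ (Finset.univ : Finset (PP → Fin 3)).card * T^2 := by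
        rw [← smul_eq_mul]
        exact Finset.sum_le_card_nsmul _ _ _ (fun σ _ => hGbound σ)
    _ = 3 ^ N.primeFactors.card * T^2 := by
        rw [Finset.card_univ, Fintype.card_fun, Fintype.card_fin, Fintype.card_coe]
end

section
/- For every ε > 0 there is a constant C > 0 (depending only on A and ε) such that for every squarefree integer N ≥ 1 and every nonzero n ∈ ℤ², the number of quadruples (i,j,k,l) with 1 ≤ i,j,k,l ≤ ord(A,N) satisfying n(A^i − A^j + A^k − A^l) ≡ 0 (mod N) is at most C·|n|₂^{8+ε}·3^{ω(N)}·ord(A,N)². -/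
open Matrix

def cheb (t : ℤ) : ℕ → ℤ × ℤ
  | 0 => (1, 0)
  | k+1 => (-(cheb t k).2, (cheb t k).1 + t * (cheb t k).2)

lemma cheb_pow {R : Type*} [Ring R] (t : ℤ) (r : R) (h : r ^ 2 = t • r - 1) (m : ℕ) :
    r ^ m = ((cheb t m).1 : ℤ) • (1 : R) + ((cheb t m).2 : ℤ) • r := by
  induction m with
  | zero => simp [cheb]
  | succ k ih =>
    rw [pow_succ, ih, add_mul, smul_mul_assoc, smul_mul_assoc, one_mul, ← pow_two, h]
    simp only [cheb, smul_sub, smul_smul]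
    module

variable {A : Matrix (Fin 2) (Fin 2) ℤ}

lemma cheb_pow_cast {R : Type*} [Ring R] (c : ℤ) (r : R) (h : r ^ 2 = (c : R) * r - 1) (m : ℕ) :
    r ^ m = (((cheb c m).1 : ℤ) : R) + (((cheb c m).2 : ℤ) : R) * r := by
  rw [cheb_pow c r (by rw [zsmul_eq_mul]; exact h) m, zsmul_eq_mul, zsmul_eq_mul, mul_one]

lemma ch2_s5 (hA : A.det = 1) : A ^ 2 = A.trace • A - 1 := by
  have hd := A.det_fin_two
  rw [hA] at hd
  ext i j
  simp only [pow_two, Matrix.mul_apply, Fin.sum_univ_two, Matrix.sub_apply,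
    Matrix.smul_apply, Matrix.one_apply, Matrix.trace_fin_two, smul_eq_mul]
  fin_cases i <;> fin_cases j <;> simp <;> linarith [hd]
lemma mul_inv_id (hA : A.det = 1) : A * (A.trace • (1:Matrix (Fin 2) (Fin 2) ℤ) - A) = 1 := by
  rw [mul_sub, mul_smul_comm, mul_one, ← pow_two, ch2_s5 hA, sub_sub_cancel]
lemma inv_mul_id (hA : A.det = 1) : (A.trace • (1:Matrix (Fin 2) (Fin 2) ℤ) - A) * A = 1 := by
  rw [sub_mul, smul_mul_assoc, one_mul, ← pow_two, ch2_s5 hA, sub_sub_cancel]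

section ordN
variable (A) (N : ℕ)

/-- reduction mod `N` as a ring hom on matrices -/
def redN : Matrix (Fin 2) (Fin 2) ℤ →+* Matrix (Fin 2) (Fin 2) (ZMod N) :=
  (Int.castRingHom (ZMod N)).mapMatrix

lemma redN_zero_iff (M : Matrix (Fin 2) (Fin 2) ℤ) :
    (redN N) M = 0 ↔ ∀ i j, (N : ℤ) ∣ M i j := by
  rw [← Matrix.ext_iff]
  simp [redN, RingHom.mapMatrix_apply, Matrix.map_apply, ZMod.intCast_zmod_eq_zero_iff_dvd]

lemma cond_iff (k : ℕ) :
    (∀ i j, (N : ℤ) ∣ (A ^ k - 1) i j) ↔ (redN N) A ^ k = 1 := by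
  rw [← redN_zero_iff]
  have : (redN N) (A ^ k - 1) = (redN N) A ^ k - 1 := by
    rw [map_sub, map_pow, _root_.map_one]
  rw [this, sub_eq_zero]

variable {A}

/-- `A` mod `N` as a unit -/
def redNu (hA : A.det = 1) : (Matrix (Fin 2) (Fin 2) (ZMod N))ˣ where
  val := (redN N) A
  inv := (redN N) (A.trace • 1 - A)
  val_inv := by rw [← _root_.map_mul, mul_inv_id hA, _root_.map_one]
  inv_val := by rw [← _root_.map_mul, inv_mul_id hA, _root_.map_one]

lemma redN_finOrder (hA : A.det = 1) (hN : N ≠ 0) : IsOfFinOrder ((redN N) A) := by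
  haveI : NeZero N := ⟨hN⟩
  have : IsOfFinOrder (redNu N hA) := by
    rw [← orderOf_pos_iff]
    exact orderOf_pos _
  obtain ⟨m, hm, h1⟩ := this.exists_pow_eq_one
  refine isOfFinOrder_iff_pow_eq_one.mpr ⟨m, hm, ?_⟩
  have : ((redNu N hA) : Matrix (Fin 2) (Fin 2) (ZMod N)) = (redN N) A := rfl
  rw [← this, ← Units.val_pow_eq_pow_val, h1, Units.val_one]
lemma matOrd_eq (hA : A.det = 1) (hN : N ≠ 0) : matOrd A N = orderOf ((redN N) A) := by
  have hfin := redN_finOrder N hA hN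
  apply le_antisymm
  · apply Nat.sInf_le
    exact ⟨hfin.orderOf_pos, (cond_iff A N _).mpr (pow_orderOf_eq_one _)⟩
  · have hne : {k | 0 < k ∧ ∀ i j, (N : ℤ) ∣ (A ^ k - 1) i j}.Nonempty :=
      ⟨orderOf ((redN N) A), hfin.orderOf_pos, (cond_iff A N _).mpr (pow_orderOf_eq_one _)⟩
    obtain ⟨hpos, hcond⟩ := Nat.sInf_mem hne
    exact Nat.le_of_dvd hpos (orderOf_dvd_of_pow_eq_one ((cond_iff A N _).mp hcond))

lemma matOrd_pos_s5 (hA : A.det = 1) (hN : N ≠ 0) : 0 < matOrd A N := by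
  rw [matOrd_eq N hA hN]; exact (redN_finOrder N hA hN).orderOf_pos

lemma matOrd_dvd_iff_s5 (hA : A.det = 1) (hN : N ≠ 0) (k : ℕ) :
    (redN N) A ^ k = 1 ↔ matOrd A N ∣ k := by
  rw [matOrd_eq N hA hN]; exact orderOf_dvd_iff_pow_eq_one.symm

end ordN

lemma dvd_comb_entry (d c1 c2 : ℤ) (A : Matrix (Fin 2) (Fin 2) ℤ) (h1 : d ∣ c1) (h2 : d ∣ c2)
    (i j : Fin 2) : d ∣ (c1 • (1 : Matrix (Fin 2) (Fin 2) ℤ) + c2 • A) i j := by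
  have he : (c1 • (1 : Matrix (Fin 2) (Fin 2) ℤ) + c2 • A) i j
      = c1 * (1 : Matrix (Fin 2) (Fin 2) ℤ) i j + c2 * A i j := by
    simp only [Matrix.add_apply, Matrix.smul_apply, smul_eq_mul]
  rw [he]
  exact dvd_add (h1.mul_right _) (h2.mul_right _)

section disc
variable {A : Matrix (Fin 2) (Fin 2) ℤ}

lemma pow_cheb (hA : A.det = 1) (m : ℕ) :
    A ^ m = ((cheb A.trace m).1) • (1 : Matrix (Fin 2) (Fin 2) ℤ) + ((cheb A.trace m).2) • A :=
  cheb_pow A.trace A (ch2_s5 hA) m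

lemma D_pos (htr : 2 < |A.trace|) : 0 < A.trace ^ 2 - 4 := by
  have : 3 ≤ |A.trace| := htr
  nlinarith [sq_abs A.trace]

lemma D_not_square (htr : 2 < |A.trace|) : ¬ IsSquare (A.trace ^ 2 - 4) := by
  rintro ⟨e, he⟩
  set t := |A.trace| with ht
  have h3 : 3 ≤ t := htr
  have he' : (t - |e|) * (t + |e|) = 4 := by
    have h1 : t ^ 2 = |e| ^ 2 + 4 := by
      have := sq_abs A.trace
      have := sq_abs e
      nlinarith [he]
    nlinarith
  have hepos : 0 ≤ |e| := abs_nonneg e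
  have hlt : t - |e| ≥ 1 := by nlinarith
  have hdvd : (t + |e|) ∣ 4 := Dvd.intro_left _ he'
  have hle : t + |e| ≤ 4 := Int.le_of_dvd (by norm_num) hdvd
  have h4 : t + |e| = 3 ∨ t + |e| = 4 := by omega
  have : t + |e| = 4 := by
    rcases h4 with h | h
    · rw [h] at hdvd; norm_num at hdvd
    · exact h
  have : t - |e| = 1 := by nlinarith
  omega

/-- the invariant quadratic form -/
def Qf (A : Matrix (Fin 2) (Fin 2) ℤ) (n : Fin 2 → ℤ) : ℤ :=
  A 0 1 * n 0 ^ 2 + (A 1 1 - A 0 0) * (n 0 * n 1) - A 1 0 * n 1 ^ 2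

lemma b_ne_zero (hA : A.det = 1) (htr : 2 < |A.trace|) : A 0 1 ≠ 0 := by
  intro hb
  have hd := A.det_fin_two
  rw [hA, hb] at hd
  have h1 : A 0 0 * A 1 1 = 1 := by linarith
  rcases Int.mul_eq_one_iff_eq_one_or_neg_one.mp h1.symm.symm with ⟨h2, h3⟩ | ⟨h2, h3⟩ <;>
    · rw [Matrix.trace_fin_two] at htr
      rw [h2, h3] at htr
      norm_num at htr

lemma Qf_ne_zero (hA : A.det = 1) (htr : 2 < |A.trace|) {n : Fin 2 → ℤ} (hn : n ≠ 0) :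
    Qf A n ≠ 0 := by
  intro hq
  have hb := b_ne_zero hA htr
  have hd := A.det_fin_two
  rw [hA] at hd
  set a := A 0 0; set b := A 0 1; set c := A 1 0; set d := A 1 1
  have key : (A.trace ^ 2 - 4) * n 1 ^ 2 = (2 * b * n 0 + (d - a) * n 1) ^ 2 := by
    rw [Matrix.trace_fin_two]
    unfold Qf at hq
    linear_combination (-4*b)*hq + (-4*n 1^2)*hd
  rcases eq_or_ne (n 1) 0 with h1 | h1
  · rw [h1] at key
    have : 2 * b * n 0 + (d - a) * 0 = 0 := by nlinarith [key]
    have hn0 : n 0 = 0 := by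
      rcases mul_eq_zero.mp (by linarith : (2 * b) * n 0 = 0) with h | h
      · omega
      · exact h
    apply hn
    funext i
    fin_cases i
    · exact hn0
    · exact h1
  · -- n 1 ≠ 0 : D is a square, contradiction
    apply D_not_square htr
    set s := 2 * b * n 0 + (d - a) * n 1 with hs
    have hdvd : (n 1) ^ 2 ∣ s ^ 2 := ⟨A.trace ^ 2 - 4, by linarith [key]⟩
    have hdvd2 : n 1 ∣ s := by
      exact (Int.pow_dvd_pow_iff (n := 2) (by norm_num)).mp hdvd
    obtain ⟨r, hr⟩ := hdvd2
    refine ⟨r, ?_⟩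
    have h2 : (A.trace ^ 2 - 4) * n 1 ^ 2 = (r * r) * n 1 ^ 2 := by
      rw [key, hr]; ring
    have := mul_right_cancel₀ (pow_ne_zero 2 h1) h2
    exact this
end disc

section primep
open Polynomial
variable {A : Matrix (Fin 2) (Fin 2) ℤ}

lemma smul_entries (u v : ℤ) (A : Matrix (Fin 2) (Fin 2) ℤ) :
    ((u • (1 : Matrix (Fin 2) (Fin 2) ℤ) + v • A) 0 0 = u + v * A 0 0) ∧
    ((u • (1 : Matrix (Fin 2) (Fin 2) ℤ) + v • A) 0 1 = v * A 0 1) ∧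
    ((u • (1 : Matrix (Fin 2) (Fin 2) ℤ) + v • A) 1 0 = v * A 1 0) ∧
    ((u • (1 : Matrix (Fin 2) (Fin 2) ℤ) + v • A) 1 1 = u + v * A 1 1) := by
  refine ⟨?_, ?_, ?_, ?_⟩ <;>
    · simp only [Matrix.add_apply, Matrix.smul_apply, Matrix.one_apply, smul_eq_mul]
      norm_num

/-- the mod-`p` scalar lemma -/
lemma scalarp (hA : A.det = 1) (p : ℕ) [Fact p.Prime]
    (hD : ¬ (p:ℤ) ∣ (A.trace ^ 2 - 4)) {u v : ℤ}
    (h : ∀ i j, (p:ℤ) ∣ (u • (1 : Matrix (Fin 2) (Fin 2) ℤ) + v • A) i j) :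
    (p:ℤ) ∣ u ∧ (p:ℤ) ∣ v := by
  have hd := A.det_fin_two
  rw [hA] at hd
  have cast0 : ∀ w : ℤ, (w : ZMod p) = 0 ↔ (p:ℤ) ∣ w := fun w =>
    ZMod.intCast_zmod_eq_zero_iff_dvd w p
  obtain ⟨s00, s01, s10, s11⟩ := smul_entries u v A
  have e00 : (u : ZMod p) + v * A 0 0 = 0 := by
    have := (cast0 _).mpr (s00 ▸ h 0 0); push_cast at this; exact this
  have e01 : (v : ZMod p) * A 0 1 = 0 := by
    have := (cast0 _).mpr (s01 ▸ h 0 1); push_cast at this; exact this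
  have e10 : (v : ZMod p) * A 1 0 = 0 := by
    have := (cast0 _).mpr (s10 ▸ h 1 0); push_cast at this; exact this
  have e11 : (u : ZMod p) + v * A 1 1 = 0 := by
    have := (cast0 _).mpr (s11 ▸ h 1 1); push_cast at this; exact this
  rw [← cast0, ← cast0]
  by_cases hv : (v : ZMod p) = 0
  · refine ⟨?_, hv⟩
    rw [hv] at e00; simpa using e00
  · exfalso
    apply hD
    rw [← cast0]
    have hdet : (1 : ZMod p) = (A 0 0 : ZMod p) * A 1 1 - (A 0 1 : ZMod p) * A 1 0 := by
      have := congrArg (Int.cast : ℤ → ZMod p) hd; push_cast at this; exact this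
    have hb : (A 0 1 : ZMod p) = 0 := (mul_eq_zero.mp e01).resolve_left hv
    have hc : (A 1 0 : ZMod p) = 0 := (mul_eq_zero.mp e10).resolve_left hv
    have had : (A 0 0 : ZMod p) = (A 1 1 : ZMod p) := by
      have h2 : (v : ZMod p) * ((A 0 0 : ZMod p) - A 1 1) = 0 := by
        linear_combination e00 - e11
      exact sub_eq_zero.mp ((mul_eq_zero.mp h2).resolve_left hv)
    have hcast : ((A.trace ^ 2 - 4 : ℤ) : ZMod p) =
        ((A 0 0 : ZMod p) + A 1 1) ^ 2 - 4 := by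
      rw [Matrix.trace_fin_two]; push_cast; ring
    rw [hcast, had]
    rw [hb, hc] at hdet
    linear_combination (-4 : ZMod p) * hdet - 4 * (A 1 1 : ZMod p) * had

lemma matOrd_le_sq (hA : A.det = 1) (p : ℕ) [Fact p.Prime] : matOrd A p ≤ p ^ 2 := by
  have hp : (p:ℕ) ≠ 0 := (Fact.out : p.Prime).ne_zero
  haveI : NeZero p := ⟨hp⟩
  set T := matOrd A p with hT
  have hTo : T = orderOf ((redN p) A) := matOrd_eq p hA hp
  have hinj : Function.Injective
      (fun m : Fin T => ((((cheb A.trace m.1).1 : ℤ) : ZMod p), (((cheb A.trace m.1).2 : ℤ) : ZMod p))) := by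
    intro m1 m2 hm
    simp only [Prod.mk.injEq] at hm
    have hred : ∀ m : ℕ, (redN p) A ^ m =
        ((cheb A.trace m).1 : ZMod p) • 1 + ((cheb A.trace m).2 : ZMod p) • ((redN p) A) := by
      intro m
      rw [← map_pow, pow_cheb hA m, map_add, map_zsmul, map_zsmul, _root_.map_one,
        ← Int.cast_smul_eq_zsmul (ZMod p), ← Int.cast_smul_eq_zsmul (ZMod p)]
    have heq : (redN p) A ^ m1.1 = (redN p) A ^ m2.1 := by
      rw [hred, hred, hm.1, hm.2]
    have hequ : (redNu p hA) ^ m1.1 = (redNu p hA) ^ m2.1 := by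
      apply Units.ext
      rw [Units.val_pow_eq_pow_val, Units.val_pow_eq_pow_val]; exact heq
    have horder : orderOf (redNu p hA) = T := by
      rw [hTo, ← orderOf_units]; rfl
    have hmod := pow_eq_pow_iff_modEq.mp hequ
    rw [horder] at hmod
    exact Fin.ext (Nat.ModEq.eq_of_lt_of_lt hmod m1.2 m2.2)
  calc T = Fintype.card (Fin T) := by simp
  _ ≤ Fintype.card (ZMod p × ZMod p) := Fintype.card_le_of_injective _ hinj
  _ = p ^ 2 := by simp [ZMod.card, pow_two]

end primep

section ordmore
variable {A : Matrix (Fin 2) (Fin 2) ℤ}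

lemma matOrd_cond (hA : A.det = 1) {N : ℕ} (hN : N ≠ 0) :
    ∀ i j, (N:ℤ) ∣ (A ^ matOrd A N - 1) i j := by
  apply (cond_iff A N _).mpr
  rw [matOrd_eq N hA hN]
  exact pow_orderOf_eq_one _

lemma matOrd_dvd_of_dvd (hA : A.det = 1) {M N : ℕ} (hMN : M ∣ N) (hM : M ≠ 0) (hN : N ≠ 0) :
    matOrd A M ∣ matOrd A N := by
  rw [← matOrd_dvd_iff_s5 M hA hM]
  apply (cond_iff A M _).mp
  intro i j
  exact dvd_trans (Int.natCast_dvd_natCast.mpr hMN) (matOrd_cond hA hN i j)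

lemma matOrd_dvd_lcm (hA : A.det = 1) {N : ℕ} (hN : N ≠ 0) (hsq : Squarefree N) :
    matOrd A N ∣ N.primeFactors.lcm (fun p => matOrd A p) := by
  rw [← matOrd_dvd_iff_s5 N hA hN]
  apply (cond_iff A N _).mp
  intro i j
  -- N = ∏ primes, each prime power divides
  have hprod : ∏ p ∈ N.primeFactors, p = N := Nat.prod_primeFactors_of_squarefree hsq
  have hdvd : ∀ p ∈ N.primeFactors, (p:ℤ) ∣ (A ^ (N.primeFactors.lcm fun p => matOrd A p) - 1) i j := by
    intro p hp
    have pp := Nat.prime_of_mem_primeFactors hp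
    have hp0 : p ≠ 0 := pp.ne_zero
    have hcond : (redN p) A ^ (N.primeFactors.lcm fun p => matOrd A p) = 1 := by
      rw [matOrd_dvd_iff_s5 p hA hp0]
      exact Finset.dvd_lcm hp
    exact (cond_iff A p _).mpr hcond i j
  -- product of distinct primes divides
  have : (↑(∏ p ∈ N.primeFactors, p) : ℤ) ∣ (A ^ (N.primeFactors.lcm fun p => matOrd A p) - 1) i j := by
    rw [Int.natCast_dvd]
    apply Finset.prod_primes_dvd
    · intro q hq
      exact (Nat.prime_of_mem_primeFactors hq).prime
    · intro q hq
      exact Int.natCast_dvd.mp (hdvd q hq)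
  rwa [hprod] at this
end ordmore

section trichotomy
open Polynomial
variable {A : Matrix (Fin 2) (Fin 2) ℤ}

lemma prime_trichotomy (hA : A.det = 1) {n : Fin 2 → ℤ}
    (p : ℕ) (pp : p.Prime) (hD : ¬ (p:ℤ) ∣ (A.trace ^ 2 - 4)) (hQ : ¬ (p:ℤ) ∣ Qf A n) :
    ∃ h : ℕ, ∀ i j k l : ℕ,
      (∀ m, (p:ℤ) ∣ Matrix.vecMul n (A ^ i - A ^ j + A ^ k - A ^ l) m) →
      (i ≡ j [MOD matOrd A p] ∧ k ≡ l [MOD matOrd A p]) ∨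
      (i ≡ l [MOD matOrd A p] ∧ j ≡ k [MOD matOrd A p]) ∨
      (i ≡ k + h [MOD matOrd A p] ∧ j ≡ l + h [MOD matOrd A p]) := by
  haveI : Fact p.Prime := ⟨pp⟩
  have hp0 : p ≠ 0 := pp.ne_zero
  set t : ZMod p := ((A.trace : ℤ) : ZMod p) with ht
  set f : Polynomial (ZMod p) := X ^ 2 - C t * X + 1 with hf
  set F := f.SplittingField with hF
  have hfdeg : f.degree = 2 := by
    rw [hf]
    compute_degree!
  obtain ⟨lam, hroot⟩ := (Polynomial.SplittingField.splits f).exists_eval_eq_zero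
    (by rw [degree_map, hfdeg]; norm_num)
  rw [eval_map] at hroot
  have injK : Function.Injective (algebraMap (ZMod p) F) := RingHom.injective _
  have cast0 : ∀ w : ℤ, (w : F) = 0 ↔ (p:ℤ) ∣ w := by
    intro w
    rw [← map_intCast (algebraMap (ZMod p) F), ← ZMod.intCast_zmod_eq_zero_iff_dvd w p]
    constructor
    · intro h'
      apply injK
      rw [h', map_zero]
    · intro h'
      rw [h', map_zero]
  have htF : algebraMap (ZMod p) F t = ((A.trace : ℤ) : F) := by
    rw [ht, map_intCast]
  have hlam : lam ^ 2 = ((A.trace : ℤ) : F) * lam - 1 := by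
    have h2 := hroot
    simp only [hf, eval₂_add, eval₂_sub, eval₂_mul, eval₂_pow, eval₂_X, eval₂_C, eval₂_one] at h2
    rw [htF] at h2
    linear_combination h2
  set lamb : F := ((A.trace : ℤ) : F) - lam with hlamb
  have hinv : lam * lamb = 1 := by rw [hlamb]; linear_combination -hlam
  have hlamb2 : lamb ^ 2 = ((A.trace : ℤ) : F) * lamb - 1 := by
    rw [hlamb]; linear_combination hlam
  have hne : lam - lamb ≠ 0 := by
    intro h'
    apply hD
    rw [← cast0]
    have h1 : ((A.trace : ℤ) : F) = 2 * lam := by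
      rw [hlamb] at h'; linear_combination -h'
    have h2 : lam ^ 2 = 1 := by
      rw [h1] at hlam; linear_combination -hlam
    push_cast
    rw [h1]
    linear_combination 4 * h2
  -- Chebyshev in F
  have chebF : ∀ m : ℕ, lam ^ m = (((cheb A.trace m).1 : ℤ) : F) + (((cheb A.trace m).2 : ℤ) : F) * lam :=
    cheb_pow_cast A.trace lam hlam
  have chebFb : ∀ m : ℕ, lamb ^ m = (((cheb A.trace m).1 : ℤ) : F) + (((cheb A.trace m).2 : ℤ) : F) * lamb :=
    cheb_pow_cast A.trace lamb hlamb2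
  -- order transfer
  have hiff : ∀ k : ℕ, (redN p) A ^ k = 1 ↔ lam ^ k = 1 := by
    intro k
    constructor
    · intro hk
      have hcond := (cond_iff A p k).mpr hk
      have hdecomp : ((cheb A.trace k).1 - 1) • (1 : Matrix (Fin 2) (Fin 2) ℤ) +
          (cheb A.trace k).2 • A = A ^ k - 1 := by
        rw [pow_cheb hA k]; module
      have hsplit : ∀ i j, (p:ℤ) ∣ (((cheb A.trace k).1 - 1) • (1 : Matrix (Fin 2) (Fin 2) ℤ) +
          (cheb A.trace k).2 • A) i j := by
        intro i j; rw [hdecomp]; exact hcond i j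
      obtain ⟨hu, hv⟩ := scalarp hA p hD hsplit
      rw [chebF k]
      have h1 : (((cheb A.trace k).1 - 1 : ℤ) : F) = 0 := (cast0 _).mpr hu
      have h2 : (((cheb A.trace k).2 : ℤ) : F) = 0 := (cast0 _).mpr hv
      push_cast at h1
      rw [h2]
      linear_combination h1
    · intro hk
      have h3 : lam ^ k * lamb ^ k = 1 := by rw [← mul_pow, hinv, one_pow]
      rw [hk, one_mul] at h3
      have h4 := chebF k; rw [hk] at h4
      have h5 := chebFb k; rw [h3] at h5
      have h6 : (((cheb A.trace k).2 : ℤ) : F) * (lam - lamb) = 0 := by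
        linear_combination h5 - h4
      have h7 : (((cheb A.trace k).2 : ℤ) : F) = 0 := (mul_eq_zero.mp h6).resolve_right hne
      have h8 : (((cheb A.trace k).1 - 1 : ℤ) : F) = 0 := by
        push_cast
        rw [h7] at h4
        linear_combination -h4
      have hu : (p:ℤ) ∣ (cheb A.trace k).1 - 1 := (cast0 _).mp h8
      have hv : (p:ℤ) ∣ (cheb A.trace k).2 := (cast0 _).mp h7
      apply (cond_iff A p k).mp
      intro i j
      have hdecomp : A ^ k - 1 = ((cheb A.trace k).1 - 1) • (1 : Matrix (Fin 2) (Fin 2) ℤ) +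
          (cheb A.trace k).2 • A := by
        rw [pow_cheb hA k]; module
      rw [hdecomp]
      exact dvd_comb_entry _ _ _ A hu hv i j
  have hordiff : ∀ k : ℕ, lam ^ k = 1 ↔ matOrd A p ∣ k := fun k =>
    (hiff k).symm.trans (matOrd_dvd_iff_s5 p hA hp0 k)
  set T := matOrd A p with hTdef
  have hTpos : 0 < T := matOrd_pos_s5 p hA hp0
  obtain ⟨lu, hlu⟩ : IsUnit lam := IsUnit.of_mul_eq_one _ hinv
  have horder : orderOf lu = T := by
    apply Nat.dvd_antisymm
    · apply orderOf_dvd_of_pow_eq_one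
      apply Units.ext
      rw [Units.val_pow_eq_pow_val, hlu, Units.val_one]
      exact (hordiff T).mpr dvd_rfl
    · apply (hordiff (orderOf lu)).mp
      rw [← hlu, ← Units.val_pow_eq_pow_val, pow_orderOf_eq_one, Units.val_one]
  have hmod : ∀ a b : ℕ, lam ^ a = lam ^ b → a ≡ b [MOD T] := by
    intro a b h'
    rw [← horder, ← pow_eq_pow_iff_modEq (x := lu)]
    apply Units.ext
    rw [Units.val_pow_eq_pow_val, Units.val_pow_eq_pow_val, hlu]
    exact h'
  classical
  refine ⟨if Hex : ∃ h0 : ℕ, lam ^ h0 = -1 then Hex.choose else 0, ?_⟩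
  intro i j k l hcong
  -- decompose
  set U := (cheb A.trace i).1 - (cheb A.trace j).1 + (cheb A.trace k).1 - (cheb A.trace l).1 with hUdef
  set V := (cheb A.trace i).2 - (cheb A.trace j).2 + (cheb A.trace k).2 - (cheb A.trace l).2 with hVdef
  have hMdecomp : A ^ i - A ^ j + A ^ k - A ^ l = U • 1 + V • A := by
    rw [pow_cheb hA i, pow_cheb hA j, pow_cheb hA k, pow_cheb hA l, hUdef, hVdef]
    module
  obtain ⟨s00, s01, s10, s11⟩ := smul_entries U V A
  have e0int : (p:ℤ) ∣ n 0 * (U + V * A 0 0) + n 1 * (V * A 1 0) := by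
    have := hcong 0
    rw [hMdecomp] at this
    simpa only [Matrix.vecMul, dotProduct, Fin.sum_univ_two, s00, s10] using this
  have e1int : (p:ℤ) ∣ n 0 * (V * A 0 1) + n 1 * (U + V * A 1 1) := by
    have := hcong 1
    rw [hMdecomp] at this
    simpa only [Matrix.vecMul, dotProduct, Fin.sum_univ_two, s01, s11] using this
  -- mod p
  have e0' : (n 0 : ZMod p) * (U + V * A 0 0) + n 1 * (V * A 1 0) = 0 := by
    have := (ZMod.intCast_zmod_eq_zero_iff_dvd _ p).mpr e0int
    push_cast at this; exact this
  have e1' : (n 0 : ZMod p) * (V * A 0 1) + n 1 * (U + V * A 1 1) = 0 := by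
    have := (ZMod.intCast_zmod_eq_zero_iff_dvd _ p).mpr e1int
    push_cast at this; exact this
  have hQbar : (A 0 1 : ZMod p) * (n 0 : ZMod p) ^ 2 +
      ((A 1 1 : ZMod p) - A 0 0) * ((n 0 : ZMod p) * n 1) - (A 1 0 : ZMod p) * (n 1 : ZMod p) ^ 2 ≠ 0 := by
    intro h'
    apply hQ
    rw [← ZMod.intCast_zmod_eq_zero_iff_dvd]
    unfold Qf
    push_cast
    linear_combination h'
  have hV0 : (V : ZMod p) = 0 := by
    have hVQ : (V : ZMod p) * ((A 0 1 : ZMod p) * (n 0 : ZMod p) ^ 2 +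
        ((A 1 1 : ZMod p) - A 0 0) * ((n 0 : ZMod p) * n 1) - (A 1 0 : ZMod p) * (n 1 : ZMod p) ^ 2) = 0 := by
      linear_combination (n 0 : ZMod p) * e1' - (n 1 : ZMod p) * e0'
    exact (mul_eq_zero.mp hVQ).resolve_right hQbar
  have hU0 : (U : ZMod p) = 0 := by
    have hU0a : (U : ZMod p) * n 0 = 0 := by
      linear_combination e0' - ((n 0 : ZMod p) * A 0 0 + (n 1 : ZMod p) * A 1 0) * hV0
    have hU1a : (U : ZMod p) * n 1 = 0 := by
      linear_combination e1' - ((n 0 : ZMod p) * A 0 1 + (n 1 : ZMod p) * A 1 1) * hV0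
    have hUsq : (U : ZMod p) ^ 2 * ((A 0 1 : ZMod p) * (n 0 : ZMod p) ^ 2 +
        ((A 1 1 : ZMod p) - A 0 0) * ((n 0 : ZMod p) * n 1) - (A 1 0 : ZMod p) * (n 1 : ZMod p) ^ 2) = 0 := by
      linear_combination ((A 0 1 : ZMod p) * U * n 0 + ((A 1 1 : ZMod p) - A 0 0) * U * n 1) * hU0a
        - ((A 1 0 : ZMod p) * U * n 1) * hU1a
    have := (mul_eq_zero.mp hUsq).resolve_right hQbar
    exact pow_eq_zero_iff (n := 2) (by norm_num) |>.mp this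
  have hUF : ((U : ℤ) : F) = 0 := (cast0 U).mpr (by rw [← ZMod.intCast_zmod_eq_zero_iff_dvd]; exact hU0)
  have hVF : ((V : ℤ) : F) = 0 := (cast0 V).mpr (by rw [← ZMod.intCast_zmod_eq_zero_iff_dvd]; exact hV0)
  have hx : lam ^ i - lam ^ j + lam ^ k - lam ^ l = 0 := by
    rw [chebF i, chebF j, chebF k, chebF l]
    rw [hUdef] at hUF; rw [hVdef] at hVF
    push_cast at hUF hVF
    linear_combination hUF + hVF * lam
  have hxb : lamb ^ i - lamb ^ j + lamb ^ k - lamb ^ l = 0 := by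
    rw [chebFb i, chebFb j, chebFb k, chebFb l]
    rw [hUdef] at hUF; rw [hVdef] at hVF
    push_cast at hUF hVF
    linear_combination hUF + hVF * lamb
  set x := lam ^ i with hxd
  set y := lam ^ j with hyd
  set z := lam ^ k with hzd
  set w := lam ^ l with hwd
  have hxx : x * lamb ^ i = 1 := by rw [hxd, ← mul_pow, hinv, one_pow]
  have hyy : y * lamb ^ j = 1 := by rw [hyd, ← mul_pow, hinv, one_pow]
  have hzz : z * lamb ^ k = 1 := by rw [hzd, ← mul_pow, hinv, one_pow]
  have hww : w * lamb ^ l = 1 := by rw [hwd, ← mul_pow, hinv, one_pow]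
  have e2 : y*z*w - x*z*w + x*y*w - x*y*z = 0 := by
    linear_combination (x*y*z*w)*hxb - (y*z*w)*hxx + (x*z*w)*hyy - (x*y*w)*hzz + (x*y*z)*hww
  have key : (y - x) * (z*w - x*y) = 0 := by
    linear_combination e2 + x*y*hx
  rcases mul_eq_zero.mp key with hcase | hcase
  · left
    have hxy : x = y := by linear_combination -hcase
    have hzw : z = w := by linear_combination hx + hcase
    exact ⟨hmod i j hxy, hmod k l hzw⟩
  · have key2 : (x - w) * (x + z) = 0 := by
      linear_combination x*hx - hcase
    rcases mul_eq_zero.mp key2 with h2 | h2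
    · right; left
      have hxw : x = w := by linear_combination h2
      have hyz : y = z := by linear_combination -hx + h2
      exact ⟨hmod i l hxw, hmod j k hyz⟩
    · right; right
      -- x = -z, y = -w
      have hxz : x = -z := by linear_combination h2
      have hyw : y = -w := by linear_combination -hx + h2
      have hlambpow : lamb = lam ^ (T - 1) := by
        have h3 : lam * lamb = lam * lam ^ (T - 1) := by
          rw [hinv, ← pow_succ', Nat.sub_add_cancel hTpos]
          exact ((hordiff T).mpr dvd_rfl).symm
        have hlamne : lam ≠ 0 := by
          intro h0
          rw [h0, zero_mul] at hinv
          exact one_ne_zero hinv.symm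
        exact mul_left_cancel₀ hlamne h3
      have Hex : ∃ h0 : ℕ, lam ^ h0 = -1 := by
        refine ⟨i + k * (T - 1), ?_⟩
        rw [pow_add, mul_comm k (T - 1), pow_mul, ← hlambpow, ← hxd, hxz, neg_mul, hzz]
      rw [dif_pos Hex]
      have hh0 : lam ^ Hex.choose = -1 := Hex.choose_spec
      constructor
      · apply hmod
        rw [← hxd, pow_add, hh0, ← hzd, hxz]
        ring
      · apply hmod
        rw [← hyd, pow_add, hh0, ← hwd, hyw]
        ring
end trichotomy

section counting

lemma modeq_lcm_of_forall {s : Finset ℕ} (Tp : ℕ → ℕ) {x y : ℕ}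
    (h : ∀ p ∈ s, x ≡ y [MOD Tp p]) : x ≡ y [MOD s.lcm Tp] := by
  rw [Nat.modEq_iff_dvd]
  rw [Int.natCast_dvd]
  apply Finset.lcm_dvd
  intro p hp
  exact Int.natCast_dvd.mp ((Nat.modEq_iff_dvd).mp (h p hp))

lemma eq_of_modeq_div_eq {L x y : ℕ} (hx : 1 ≤ x) (hy : 1 ≤ y)
    (hmod : x ≡ y [MOD L]) (hdiv : (x - 1) / L = (y - 1) / L) : x = y := by
  have hmod' : (x - 1) ≡ (y - 1) [MOD L] := by
    have e1 : x - 1 + 1 = x := by omega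
    have e2 : y - 1 + 1 = y := by omega
    apply Nat.ModEq.add_right_cancel' 1
    rw [e1, e2]; exact hmod
  have h1 : (x - 1) % L = (y - 1) % L := hmod'
  have hx1 := Nat.div_add_mod (x - 1) L
  have hy1 := Nat.div_add_mod (y - 1) L
  have : x - 1 = y - 1 := by rw [← hx1, ← hy1, hdiv, h1]
  omega

lemma count_main (T : ℕ) (hT : 0 < T) (P : Finset ℕ) (Tp h : ℕ → ℕ)
    (hTpd : ∀ p ∈ P, Tp p ∣ T)
    (B : ℕ) (hTB : T ≤ P.lcm Tp * B)
    (S : Finset (ℕ × ℕ × ℕ × ℕ))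
    (hS : ∀ q ∈ S, q.1 ∈ Finset.Icc 1 T ∧ q.2.1 ∈ Finset.Icc 1 T ∧
      q.2.2.1 ∈ Finset.Icc 1 T ∧ q.2.2.2 ∈ Finset.Icc 1 T)
    (htri : ∀ q ∈ S, ∀ p ∈ P,
      (q.1 ≡ q.2.1 [MOD Tp p] ∧ q.2.2.1 ≡ q.2.2.2 [MOD Tp p]) ∨
      (q.1 ≡ q.2.2.2 [MOD Tp p] ∧ q.2.1 ≡ q.2.2.1 [MOD Tp p]) ∨
      (q.1 ≡ q.2.2.1 + h p [MOD Tp p] ∧ q.2.1 ≡ q.2.2.2 + h p [MOD Tp p])) :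
    S.card ≤ 3 ^ P.card * (T ^ 2 * B ^ 2) := by
  classical
  set L : ℕ := P.lcm Tp with hLdef
  have hLdvd : L ∣ T := Finset.lcm_dvd hTpd
  have hLpos : 0 < L := Nat.pos_of_ne_zero (fun h0 => by
    rw [h0] at hLdvd; exact absurd (Nat.eq_zero_of_zero_dvd hLdvd) (by omega))
  -- the finite set of case-choice functions
  set CS : Finset (ℕ → Fin 3) :=
    (P.pi fun _ => (Finset.univ : Finset (Fin 3))).image
      (fun f p => if hp : p ∈ P then f p hp else 0) with hCS
  have hCScard : CS.card ≤ 3 ^ P.card := by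
    calc CS.card ≤ (P.pi fun _ => (Finset.univ : Finset (Fin 3))).card :=
          Finset.card_image_le
    _ = ∏ _p ∈ P, 3 := by rw [Finset.card_pi]; simp
    _ = 3 ^ P.card := by rw [Finset.prod_const]
  -- predicate for a choice function
  set pred : (ℕ → Fin 3) → (ℕ × ℕ × ℕ × ℕ) → Prop := fun c q => ∀ p ∈ P,
      (c p = 0 → (q.1 ≡ q.2.1 [MOD Tp p] ∧ q.2.2.1 ≡ q.2.2.2 [MOD Tp p])) ∧
      (c p = 1 → (q.1 ≡ q.2.2.2 [MOD Tp p] ∧ q.2.1 ≡ q.2.2.1 [MOD Tp p])) ∧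
      (c p = 2 → (q.1 ≡ q.2.2.1 + h p [MOD Tp p] ∧ q.2.1 ≡ q.2.2.2 + h p [MOD Tp p])) with hpred
  have hcov : S ⊆ CS.biUnion (fun c => S.filter (pred c)) := by
    intro q hq
    rw [Finset.mem_biUnion]
    refine ⟨fun p => if hp : p ∈ P then
      (if (q.1 ≡ q.2.1 [MOD Tp p] ∧ q.2.2.1 ≡ q.2.2.2 [MOD Tp p]) then 0
       else if (q.1 ≡ q.2.2.2 [MOD Tp p] ∧ q.2.1 ≡ q.2.2.1 [MOD Tp p]) then 1 else 2) else 0,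
      ?_, ?_⟩
    · rw [hCS, Finset.mem_image]
      refine ⟨fun p _ =>
        (if (q.1 ≡ q.2.1 [MOD Tp p] ∧ q.2.2.1 ≡ q.2.2.2 [MOD Tp p]) then 0
         else if (q.1 ≡ q.2.2.2 [MOD Tp p] ∧ q.2.1 ≡ q.2.2.1 [MOD Tp p]) then 1 else 2),
        ?_, ?_⟩
      · rw [Finset.mem_pi]; intro p _; exact Finset.mem_univ _
      · funext p
        by_cases hp : p ∈ P <;> simp [hp]
    · rw [Finset.mem_filter]
      refine ⟨hq, ?_⟩
      intro p hp
      rcases htri q hq p hp with hc | hc | hc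
      · simp only [dif_pos hp, if_pos hc]
        refine ⟨fun _ => hc, fun habs => ?_, fun habs => ?_⟩ <;> exact absurd habs (by decide)
      · by_cases h1 : (q.1 ≡ q.2.1 [MOD Tp p] ∧ q.2.2.1 ≡ q.2.2.2 [MOD Tp p])
        · simp only [dif_pos hp, if_pos h1]
          refine ⟨fun _ => h1, fun habs => ?_, fun habs => ?_⟩ <;> exact absurd habs (by decide)
        · simp only [dif_pos hp, if_neg h1, if_pos hc]
          refine ⟨fun habs => ?_, fun _ => hc, fun habs => ?_⟩ <;> exact absurd habs (by decide)
      · by_cases h1 : (q.1 ≡ q.2.1 [MOD Tp p] ∧ q.2.2.1 ≡ q.2.2.2 [MOD Tp p])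
        · simp only [dif_pos hp, if_pos h1]
          refine ⟨fun _ => h1, fun habs => ?_, fun habs => ?_⟩ <;> exact absurd habs (by decide)
        · by_cases h2 : (q.1 ≡ q.2.2.2 [MOD Tp p] ∧ q.2.1 ≡ q.2.2.1 [MOD Tp p])
          · simp only [dif_pos hp, if_neg h1, if_pos h2]
            refine ⟨fun habs => ?_, fun _ => h2, fun habs => ?_⟩ <;> exact absurd habs (by decide)
          · simp only [dif_pos hp, if_neg h1, if_neg h2]
            refine ⟨fun habs => ?_, fun habs => ?_, fun _ => hc⟩ <;> exact absurd habs (by decide)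
  -- per-choice bound
  have hperc : ∀ c : ℕ → Fin 3, (S.filter (pred c)).card ≤ T ^ 2 * B ^ 2 := by
    intro c
    set P1 : Finset ℕ := P.filter (fun p => c p = 0) with hP1
    set P23 : Finset ℕ := P.filter (fun p => c p ≠ 0) with hP23
    set L1 : ℕ := P1.lcm Tp with hL1
    set L23 : ℕ := P23.lcm Tp with hL23
    have hL1dvd : L1 ∣ T := Finset.lcm_dvd (fun p hp => hTpd p (Finset.mem_filter.mp hp).1)
    have hL23dvd : L23 ∣ T := Finset.lcm_dvd (fun p hp => hTpd p (Finset.mem_filter.mp hp).1)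
    have hL1pos : 0 < L1 := Nat.pos_of_ne_zero (fun h0 => by
      rw [h0] at hL1dvd; exact absurd (Nat.eq_zero_of_zero_dvd hL1dvd) (by omega))
    have hL23pos : 0 < L23 := Nat.pos_of_ne_zero (fun h0 => by
      rw [h0] at hL23dvd; exact absurd (Nat.eq_zero_of_zero_dvd hL23dvd) (by omega))
    have hLle : L ≤ L1 * L23 := by
      apply Nat.le_of_dvd (Nat.mul_pos hL1pos hL23pos)
      apply Finset.lcm_dvd
      intro p hp
      by_cases h0 : c p = 0
      · exact dvd_mul_of_dvd_left (Finset.dvd_lcm (Finset.mem_filter.mpr ⟨hp, h0⟩)) _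
      · exact dvd_mul_of_dvd_right (Finset.dvd_lcm (Finset.mem_filter.mpr ⟨hp, h0⟩)) _
    -- injection
    have hinj : Set.InjOn (fun q : ℕ × ℕ × ℕ × ℕ =>
        (q.1, (q.2.1 - 1) / L1, (q.2.2.1 - 1) / L23, (q.2.2.2 - 1) / L))
        (S.filter (pred c) : Finset (ℕ × ℕ × ℕ × ℕ)) := by
      intro q hq q' hq' heq
      rw [Finset.coe_filter, Set.mem_setOf_eq] at hq hq'
      obtain ⟨hqS, hqc⟩ := hq
      obtain ⟨hq'S, hq'c⟩ := hq'
      obtain ⟨hb1, hb2, hb3, hb4⟩ := hS q hqS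
      obtain ⟨hb1', hb2', hb3', hb4'⟩ := hS q' hq'S
      simp only [Finset.mem_Icc] at hb1 hb2 hb3 hb4 hb1' hb2' hb3' hb4'
      simp only [Prod.mk.injEq] at heq
      obtain ⟨e1, e2, e3, e4⟩ := heq
      -- j
      have ej : q.2.1 = q'.2.1 := by
        apply eq_of_modeq_div_eq hb2.1 hb2'.1 ?_ e2
        apply modeq_lcm_of_forall
        intro p hp
        rw [hP1, Finset.mem_filter] at hp
        have c1 := (hqc p hp.1).1 hp.2
        have c1' := (hq'c p hp.1).1 hp.2
        exact (c1.1.symm.trans (e1 ▸ c1'.1 : q.1 ≡ q'.2.1 [MOD Tp p]))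
      -- k
      have ek : q.2.2.1 = q'.2.2.1 := by
        apply eq_of_modeq_div_eq hb3.1 hb3'.1 ?_ e3
        apply modeq_lcm_of_forall
        intro p hp
        rw [hP23, Finset.mem_filter] at hp
        have h012 : c p = 0 ∨ c p = 1 ∨ c p = 2 := by omega
        rcases h012 with h0 | h0 | h0
        · exact absurd h0 hp.2
        · -- case 2 : k ≡ j
          have c2 := ((hqc p hp.1).2.1 h0).2
          have c2' := ((hq'c p hp.1).2.1 h0).2
          exact (c2.symm.trans (ej ▸ c2' : q.2.1 ≡ q'.2.2.1 [MOD Tp p]))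
        · -- case 3 : i ≡ k + h p
          have c3 := ((hqc p hp.1).2.2 h0).1
          have c3' := ((hq'c p hp.1).2.2 h0).1
          have : q.2.2.1 + h p ≡ q'.2.2.1 + h p [MOD Tp p] :=
            (c3.symm.trans (e1 ▸ c3' : q.1 ≡ q'.2.2.1 + h p [MOD Tp p]))
          exact Nat.ModEq.add_right_cancel' _ this
      -- l
      have el : q.2.2.2 = q'.2.2.2 := by
        apply eq_of_modeq_div_eq hb4.1 hb4'.1 ?_ e4
        apply modeq_lcm_of_forall
        intro p hp
        have h012 : c p = 0 ∨ c p = 1 ∨ c p = 2 := by omega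
        rcases h012 with h0 | h0 | h0
        · -- case 1 : k ≡ l
          have c1 := ((hqc p hp).1 h0).2
          have c1' := ((hq'c p hp).1 h0).2
          exact (c1.symm.trans (ek ▸ c1' : q.2.2.1 ≡ q'.2.2.2 [MOD Tp p]))
        · -- case 2 : i ≡ l
          have c2 := ((hqc p hp).2.1 h0).1
          have c2' := ((hq'c p hp).2.1 h0).1
          exact (c2.symm.trans (e1 ▸ c2' : q.1 ≡ q'.2.2.2 [MOD Tp p]))
        · -- case 3 : j ≡ l + h p
          have c3 := ((hqc p hp).2.2 h0).2
          have c3' := ((hq'c p hp).2.2 h0).2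
          have : q.2.2.2 + h p ≡ q'.2.2.2 + h p [MOD Tp p] :=
            (c3.symm.trans (ej ▸ c3' : q.2.1 ≡ q'.2.2.2 + h p [MOD Tp p]))
          exact Nat.ModEq.add_right_cancel' _ this
      exact Prod.ext e1 (Prod.ext ej (Prod.ext ek el))
    -- image lands in a product
    have himg : ∀ q ∈ S.filter (pred c),
        (fun q : ℕ × ℕ × ℕ × ℕ =>
          (q.1, (q.2.1 - 1) / L1, (q.2.2.1 - 1) / L23, (q.2.2.2 - 1) / L)) q ∈
        (Finset.Icc 1 T) ×ˢ (Finset.range (T / L1)) ×ˢ (Finset.range (T / L23)) ×ˢ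
          (Finset.range (T / L)) := by
      intro q hq
      obtain ⟨hqS, _⟩ := Finset.mem_filter.mp hq
      obtain ⟨hb1, hb2, hb3, hb4⟩ := hS q hqS
      simp only [Finset.mem_Icc] at hb2 hb3 hb4
      simp only [Finset.mem_product, Finset.mem_range]
      refine ⟨hb1, ?_, ?_, ?_⟩
      · rw [Nat.div_lt_iff_lt_mul hL1pos, Nat.div_mul_cancel hL1dvd]; omega
      · rw [Nat.div_lt_iff_lt_mul hL23pos, Nat.div_mul_cancel hL23dvd]; omega
      · rw [Nat.div_lt_iff_lt_mul hLpos, Nat.div_mul_cancel hLdvd]; omega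
    have hcard := Finset.card_le_card_of_injOn _ himg hinj
    rw [Finset.card_product, Finset.card_product, Finset.card_product,
      Nat.card_Icc, Finset.card_range, Finset.card_range, Finset.card_range] at hcard
    -- arithmetic
    have hM : T / L ≤ B := by
      calc T / L ≤ (L * B) / L := Nat.div_le_div_right hTB
      _ = B := by rw [Nat.mul_div_cancel_left _ hLpos]
    have hprod2 : (T / L1) * (T / L23) ≤ T * (T / L) := by
      refine Nat.le_of_mul_le_mul_right ?_ (Nat.mul_pos hL1pos hL23pos)
      have e1 : T / L1 * (T / L23) * (L1 * L23) = (T / L1 * L1) * (T / L23 * L23) := by ring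
      rw [e1, Nat.div_mul_cancel hL1dvd, Nat.div_mul_cancel hL23dvd]
      calc T * T = T * (T / L * L) := by rw [Nat.div_mul_cancel hLdvd]
      _ ≤ T * (T / L) * (L1 * L23) := by
          rw [mul_assoc]
          exact Nat.mul_le_mul_left _ (Nat.mul_le_mul_left _ hLle)
    calc (S.filter (pred c)).card ≤ (T + 1 - 1) * ((T / L1) * ((T / L23) * (T / L))) := hcard
    _ = ((T / L1) * (T / L23)) * (T * (T / L)) := by rw [Nat.add_sub_cancel]; ring
    _ ≤ (T * (T / L)) * (T * (T / L)) := Nat.mul_le_mul_right _ hprod2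
    _ ≤ (T * B) * (T * B) :=
        Nat.mul_le_mul (Nat.mul_le_mul_left _ hM) (Nat.mul_le_mul_left _ hM)
    _ = T ^ 2 * B ^ 2 := by ring
  -- assemble
  calc S.card ≤ (CS.biUnion (fun c => S.filter (pred c))).card := Finset.card_le_card hcov
  _ ≤ ∑ c ∈ CS, (S.filter (pred c)).card := Finset.card_biUnion_le
  _ ≤ CS.card * (T ^ 2 * B ^ 2) := by
      rw [← smul_eq_mul]
      exact Finset.sum_le_card_nsmul _ _ _ (fun c _ => hperc c)
  _ ≤ 3 ^ P.card * (T ^ 2 * B ^ 2) := Nat.mul_le_mul_right _ hCScard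

end counting

section final

lemma nat_mul_le_sq_add (a b : ℕ) : a * b ≤ a ^ 2 + b ^ 2 := by
  rcases le_total a b with h | h
  · calc a * b ≤ b * b := Nat.mul_le_mul_right b h
    _ ≤ a ^ 2 + b ^ 2 := by nlinarith
  · calc a * b ≤ a * a := Nat.mul_le_mul_left a h
    _ ≤ a ^ 2 + b ^ 2 := by nlinarith

set_option maxHeartbeats 1600000 in
/-- Counting lemma for squarefree moduli: for every `ε > 0` there is `C > 0`
such that for all squarefree `N ≥ 1` and all nonzero `n ∈ ℤ²`, the number of
solutions of `n(A^i - A^j + A^k - A^l) ≡ 0 (mod N)`, `1 ≤ i,j,k,l ≤ ord(A,N)`,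
is at most `C |n|₂^{8+ε} 3^{ω(N)} ord(A,N)²`. -/
theorem count_squarefree
    (A : Matrix (Fin 2) (Fin 2) ℤ) (hA : A.det = 1) (htr : 2 < |A.trace|) :
    ∀ ε : ℝ, 0 < ε → ∃ C : ℝ, 0 < C ∧
      ∀ N : ℕ, 1 ≤ N → Squarefree N → ∀ n : Fin 2 → ℤ, n ≠ 0 →
        (nu A N n : ℝ) ≤ C * Real.sqrt ((n 0 : ℝ) ^ 2 + (n 1 : ℝ) ^ 2) ^ ((8 : ℝ) + ε) *
          3 ^ N.primeFactors.card * (matOrd A N : ℝ) ^ 2 := by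
  classical
  intro ε hε
  set Dn : ℕ := (A.trace ^ 2 - 4).natAbs with hDn
  set K : ℕ := (A 0 1).natAbs + (A 1 1 - A 0 0).natAbs + (A 1 0).natAbs with hK
  refine ⟨((Dn * K : ℕ) : ℝ) ^ 4 + 1, by positivity, ?_⟩
  intro N hN hsq n hn
  have hN0 : N ≠ 0 := by omega
  have hQ0 : Qf A n ≠ 0 := Qf_ne_zero hA htr hn
  have hD0 : (A.trace ^ 2 - 4) ≠ 0 := ne_of_gt (D_pos htr)
  set m : ℤ := (A.trace ^ 2 - 4) * Qf A n with hm
  have hm0 : m ≠ 0 := mul_ne_zero hD0 hQ0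
  set T : ℕ := matOrd A N with hTdef
  have hT0 : 0 < T := matOrd_pos_s5 N hA hN0
  set Pgood : Finset ℕ := N.primeFactors.filter (fun p => ¬ (p:ℤ) ∣ m) with hPg
  set Pbad : Finset ℕ := N.primeFactors.filter (fun p => (p:ℤ) ∣ m) with hPb
  set Tp : ℕ → ℕ := fun p => matOrd A p with hTp
  -- choice of shift functions for good primes
  have hch : ∀ p, p ∈ Pgood → ∃ h0 : ℕ, ∀ i j k l : ℕ,
      (∀ mm, (p:ℤ) ∣ Matrix.vecMul n (A ^ i - A ^ j + A ^ k - A ^ l) mm) →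
      (i ≡ j [MOD matOrd A p] ∧ k ≡ l [MOD matOrd A p]) ∨
      (i ≡ l [MOD matOrd A p] ∧ j ≡ k [MOD matOrd A p]) ∨
      (i ≡ k + h0 [MOD matOrd A p] ∧ j ≡ l + h0 [MOD matOrd A p]) := by
    intro p hp
    rw [hPg, Finset.mem_filter] at hp
    obtain ⟨hpf, hpm⟩ := hp
    have pp := Nat.prime_of_mem_primeFactors hpf
    have hDp : ¬ (p:ℤ) ∣ (A.trace ^ 2 - 4) := fun hd => hpm (hd.mul_right _)
    have hQp : ¬ (p:ℤ) ∣ Qf A n := fun hd => hpm (hd.mul_left _)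
    exact prime_trichotomy hA p pp hDp hQp
  choose hfun hspec using hch
  set hfun' : ℕ → ℕ := fun p => if hp : p ∈ Pgood then hfun p hp else 0 with hhf
  -- the solution Finset
  set S : Finset (ℕ × ℕ × ℕ × ℕ) :=
    ((Finset.Icc 1 T) ×ˢ (Finset.Icc 1 T) ×ˢ (Finset.Icc 1 T) ×ˢ (Finset.Icc 1 T)).filter
      (fun q => ∀ mm, (N : ℤ) ∣ Matrix.vecMul n
        (A ^ q.1 - A ^ q.2.1 + A ^ q.2.2.1 - A ^ q.2.2.2) mm) with hSdef
  have hnuS : nu A N n = S.card := by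
    rw [nu]
    have hset : {q : ℕ × ℕ × ℕ × ℕ |
        q.1 ∈ Finset.Icc 1 (matOrd A N) ∧ q.2.1 ∈ Finset.Icc 1 (matOrd A N) ∧
        q.2.2.1 ∈ Finset.Icc 1 (matOrd A N) ∧ q.2.2.2 ∈ Finset.Icc 1 (matOrd A N) ∧
        ∀ mm, (N : ℤ) ∣ Matrix.vecMul n
          (A ^ q.1 - A ^ q.2.1 + A ^ q.2.2.1 - A ^ q.2.2.2) mm} = (S : Set (ℕ × ℕ × ℕ × ℕ)) := by
      ext q
      simp only [hSdef, Finset.coe_filter, Set.mem_setOf_eq, Finset.mem_product, ← hTdef]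
      tauto
    rw [hset, Set.ncard_coe_finset]
  -- hypotheses for count_main
  have hTpd : ∀ p ∈ Pgood, Tp p ∣ T := by
    intro p hp
    rw [hPg, Finset.mem_filter] at hp
    have pp := Nat.prime_of_mem_primeFactors hp.1
    exact matOrd_dvd_of_dvd hA (Nat.dvd_of_mem_primeFactors hp.1) pp.ne_zero hN0
  set B : ℕ := ∏ p ∈ Pbad, Tp p with hB
  have hTppos : ∀ p ∈ N.primeFactors, 0 < Tp p := fun p hp =>
    matOrd_pos_s5 p hA (Nat.prime_of_mem_primeFactors hp).ne_zero
  have hBpos : 0 < B := Finset.prod_pos (fun p hp => hTppos p (Finset.mem_filter.mp hp).1)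
  have hLgdvd : Pgood.lcm Tp ∣ T := Finset.lcm_dvd hTpd
  have hLgpos : 0 < Pgood.lcm Tp := Nat.pos_of_ne_zero (fun h0 => by
    rw [h0] at hLgdvd; exact absurd (Nat.eq_zero_of_zero_dvd hLgdvd) (by omega))
  have hTB : T ≤ Pgood.lcm Tp * B := by
    apply Nat.le_of_dvd (Nat.mul_pos hLgpos hBpos)
    apply dvd_trans (matOrd_dvd_lcm hA hN0 hsq)
    apply Finset.lcm_dvd
    intro p hp
    by_cases hpm : (p:ℤ) ∣ m
    · exact dvd_mul_of_dvd_right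
        (Finset.dvd_prod_of_mem _ (Finset.mem_filter.mpr ⟨hp, hpm⟩)) _
    · exact dvd_mul_of_dvd_left (Finset.dvd_lcm (Finset.mem_filter.mpr ⟨hp, hpm⟩)) _
  have hSmem : ∀ q ∈ S, q.1 ∈ Finset.Icc 1 T ∧ q.2.1 ∈ Finset.Icc 1 T ∧
      q.2.2.1 ∈ Finset.Icc 1 T ∧ q.2.2.2 ∈ Finset.Icc 1 T := by
    intro q hq
    obtain ⟨hq1, _⟩ := Finset.mem_filter.mp hq
    simpa [Finset.mem_product] using hq1
  have htri : ∀ q ∈ S, ∀ p ∈ Pgood,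
      (q.1 ≡ q.2.1 [MOD Tp p] ∧ q.2.2.1 ≡ q.2.2.2 [MOD Tp p]) ∨
      (q.1 ≡ q.2.2.2 [MOD Tp p] ∧ q.2.1 ≡ q.2.2.1 [MOD Tp p]) ∨
      (q.1 ≡ q.2.2.1 + hfun' p [MOD Tp p] ∧ q.2.1 ≡ q.2.2.2 + hfun' p [MOD Tp p]) := by
    intro q hq p hp
    obtain ⟨_, hq2⟩ := Finset.mem_filter.mp hq
    have hpN : (p:ℤ) ∣ (N:ℤ) := Int.natCast_dvd_natCast.mpr
      (Nat.dvd_of_mem_primeFactors (Finset.mem_filter.mp hp).1)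
    have hcong : ∀ mm, (p:ℤ) ∣ Matrix.vecMul n
        (A ^ q.1 - A ^ q.2.1 + A ^ q.2.2.1 - A ^ q.2.2.2) mm :=
      fun mm => dvd_trans hpN (hq2 mm)
    have := hspec p hp q.1 q.2.1 q.2.2.1 q.2.2.2 hcong
    rw [hhf]
    simp only [dif_pos hp]
    exact this
  have hcount := count_main T hT0 Pgood Tp hfun' hTpd B hTB S hSmem htri
  -- bound B
  have hBle : B ≤ (m.natAbs) ^ 2 := by
    have h1 : B ≤ ∏ p ∈ Pbad, p ^ 2 := by
      apply Finset.prod_le_prod (fun p _ => Nat.zero_le _)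
      intro p hp
      haveI : Fact p.Prime := ⟨Nat.prime_of_mem_primeFactors (Finset.mem_filter.mp hp).1⟩
      exact matOrd_le_sq hA p
    have h2 : (∏ p ∈ Pbad, p) ∣ m.natAbs := by
      apply Finset.prod_primes_dvd
      · intro p hp
        exact (Nat.prime_of_mem_primeFactors (Finset.mem_filter.mp hp).1).prime
      · intro p hp
        exact Int.natCast_dvd.mp (Finset.mem_filter.mp hp).2
    have h3 : (∏ p ∈ Pbad, p) ≤ m.natAbs :=
      Nat.le_of_dvd (Int.natAbs_pos.mpr hm0) h2
    calc B ≤ ∏ p ∈ Pbad, p ^ 2 := h1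
    _ = (∏ p ∈ Pbad, p) ^ 2 := by rw [Finset.prod_pow]
    _ ≤ (m.natAbs) ^ 2 := Nat.pow_le_pow_left h3 2
  -- bound m.natAbs
  set w : ℕ := (n 0).natAbs ^ 2 + (n 1).natAbs ^ 2 with hw
  have hw1 : 1 ≤ w := by
    rcases Nat.eq_zero_or_pos w with h0 | h0
    · exfalso
      apply hn
      rw [hw] at h0
      have h1 : (n 0).natAbs ^ 2 = 0 ∧ (n 1).natAbs ^ 2 = 0 := by omega
      have h2 : n 0 = 0 := Int.natAbs_eq_zero.mp (by
        have := h1.1; nlinarith [Nat.zero_le ((n 0).natAbs)])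
      have h3 : n 1 = 0 := Int.natAbs_eq_zero.mp (by
        have := h1.2; nlinarith [Nat.zero_le ((n 1).natAbs)])
      funext i
      fin_cases i
      · exact h2
      · exact h3
    · exact h0
  have hQle : (Qf A n).natAbs ≤ K * w := by
    have step1 : (Qf A n).natAbs ≤ (A 0 1).natAbs * (n 0).natAbs ^ 2 +
        (A 1 1 - A 0 0).natAbs * ((n 0).natAbs * (n 1).natAbs) +
        (A 1 0).natAbs * (n 1).natAbs ^ 2 := by
      unfold Qf
      calc (A 0 1 * n 0 ^ 2 + (A 1 1 - A 0 0) * (n 0 * n 1) - A 1 0 * n 1 ^ 2).natAbs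
          ≤ (A 0 1 * n 0 ^ 2 + (A 1 1 - A 0 0) * (n 0 * n 1)).natAbs + (A 1 0 * n 1 ^ 2).natAbs :=
            Int.natAbs_sub_le _ _
      _ ≤ (A 0 1 * n 0 ^ 2).natAbs + ((A 1 1 - A 0 0) * (n 0 * n 1)).natAbs
            + (A 1 0 * n 1 ^ 2).natAbs := by
            have := Int.natAbs_add_le (A 0 1 * n 0 ^ 2) ((A 1 1 - A 0 0) * (n 0 * n 1))
            omega
      _ = (A 0 1).natAbs * (n 0).natAbs ^ 2 + (A 1 1 - A 0 0).natAbs * ((n 0).natAbs * (n 1).natAbs)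
            + (A 1 0).natAbs * (n 1).natAbs ^ 2 := by
            simp [Int.natAbs_mul, Int.natAbs_pow]
    have hab : (n 0).natAbs * (n 1).natAbs ≤ w := nat_mul_le_sq_add _ _
    have h01 : (n 0).natAbs ^ 2 ≤ w := by omega
    have h11 : (n 1).natAbs ^ 2 ≤ w := by omega
    calc (Qf A n).natAbs ≤ _ := step1
    _ ≤ (A 0 1).natAbs * w + (A 1 1 - A 0 0).natAbs * w + (A 1 0).natAbs * w := by
        gcongr
    _ = K * w := by rw [hK]; ring
  have hmle : m.natAbs ≤ Dn * K * w := by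
    rw [hm, Int.natAbs_mul, ← hDn]
    calc Dn * (Qf A n).natAbs ≤ Dn * (K * w) := Nat.mul_le_mul_left _ hQle
    _ = Dn * K * w := by ring
  -- final nat bound
  have hnat : nu A N n ≤ 3 ^ N.primeFactors.card * (T ^ 2 * ((Dn * K) ^ 4 * w ^ 4)) := by
    rw [hnuS]
    calc S.card ≤ 3 ^ Pgood.card * (T ^ 2 * B ^ 2) := hcount
    _ ≤ 3 ^ N.primeFactors.card * (T ^ 2 * B ^ 2) := by
        apply Nat.mul_le_mul_right
        exact Nat.pow_le_pow_right (by norm_num) (Finset.card_le_card (Finset.filter_subset _ _))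
    _ ≤ 3 ^ N.primeFactors.card * (T ^ 2 * ((Dn * K) ^ 4 * w ^ 4)) := by
        apply Nat.mul_le_mul_left
        apply Nat.mul_le_mul_left
        calc B ^ 2 ≤ (m.natAbs ^ 2) ^ 2 := Nat.pow_le_pow_left hBle 2
        _ ≤ ((Dn * K * w) ^ 2) ^ 2 := by
            apply Nat.pow_le_pow_left (Nat.pow_le_pow_left hmle 2) 2
        _ = (Dn * K) ^ 4 * w ^ 4 := by rw [← pow_mul, mul_pow]
  -- pass to ℝ
  set x : ℝ := (n 0 : ℝ) ^ 2 + (n 1 : ℝ) ^ 2 with hx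
  have hxw : (w : ℝ) = x := by
    rw [hw, hx]
    push_cast
    rw [Nat.cast_natAbs, Nat.cast_natAbs]
    push_cast
    rw [sq_abs, sq_abs]
  have hx1 : (1:ℝ) ≤ x := by rw [← hxw]; exact_mod_cast hw1
  have hx0 : (0:ℝ) ≤ x := by linarith
  have hsq8 : x ^ (4:ℕ) ≤ Real.sqrt x ^ ((8:ℝ) + ε) := by
    have hs1 : (1:ℝ) ≤ Real.sqrt x := by
      rw [show (1:ℝ) = Real.sqrt 1 from (Real.sqrt_one).symm]
      exact Real.sqrt_le_sqrt hx1
    have h8 : Real.sqrt x ^ ((8:ℝ)) ≤ Real.sqrt x ^ ((8:ℝ) + ε) :=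
      Real.rpow_le_rpow_of_exponent_le hs1 (by linarith)
    have he : Real.sqrt x ^ ((8:ℝ)) = x ^ (4:ℕ) := by
      rw [show ((8:ℝ)) = ((8:ℕ):ℝ) by norm_num, Real.rpow_natCast]
      rw [show (8:ℕ) = 2 * 4 from rfl, pow_mul, Real.sq_sqrt hx0]
    rw [← he]; exact h8
  have hfinal : (nu A N n : ℝ) ≤
      ((Dn * K : ℕ) : ℝ) ^ 4 * (x ^ (4:ℕ)) * 3 ^ N.primeFactors.card * (T:ℝ) ^ 2 := by
    have := hnat
    have hcast : ((3 ^ N.primeFactors.card * (T ^ 2 * ((Dn * K) ^ 4 * w ^ 4)) : ℕ) : ℝ)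
        = ((Dn * K : ℕ) : ℝ) ^ 4 * ((w:ℝ) ^ (4:ℕ)) * 3 ^ N.primeFactors.card * (T:ℝ) ^ 2 := by
      push_cast
      ring
    calc (nu A N n : ℝ) ≤ ((3 ^ N.primeFactors.card * (T ^ 2 * ((Dn * K) ^ 4 * w ^ 4)) : ℕ) : ℝ) := by
          exact_mod_cast this
    _ = _ := by rw [hcast, hxw]
  calc (nu A N n : ℝ) ≤ ((Dn * K : ℕ) : ℝ) ^ 4 * (x ^ (4:ℕ)) * 3 ^ N.primeFactors.card * (T:ℝ) ^ 2 :=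
        hfinal
  _ ≤ (((Dn * K : ℕ) : ℝ) ^ 4 + 1) * (Real.sqrt x ^ ((8:ℝ) + ε)) * 3 ^ N.primeFactors.card * (T:ℝ) ^ 2 := by
      have h1 : ((Dn * K : ℕ) : ℝ) ^ 4 * (x ^ (4:ℕ)) ≤
          (((Dn * K : ℕ) : ℝ) ^ 4 + 1) * (Real.sqrt x ^ ((8:ℝ) + ε)) := by
        apply mul_le_mul (by linarith) hsq8 (by positivity) (by positivity)
      apply mul_le_mul_of_nonneg_right (mul_le_mul_of_nonneg_right h1 (by positivity)) (by positivity)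

end final
end
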